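/- arXiv:0803.0690 — 9 statements merged into one kernel-verified Lean document; each statement's English description precedes it below -/
import Mathlib

section
/- Let τ ∈ ℂ with Im τ > 0, set σ = √(Im τ), and let L = ℤ·(σ⁻¹τ) + ℤ·(σ⁻¹) ⊂ ℂ ≅ ℝ² (a lattice of covolume 1). Then for every continuous L-periodic function f : ℝ² → ℝ with f > 0, the metric g = f²(dx²+dy²) satisfies area(g) − σ²·sys(g)² ≥ var(f). -/
open MeasureTheory intervalIntegral

private lemma my_swap (F : ℝ → ℝ → ℝ) (hF : Continuous (Function.uncurry F)) :
    ∫ s in (0:ℝ)..1, ∫ t in (0:ℝ)..1, F s t = ∫ t in (0:ℝ)..1, ∫ s in (0:ℝ)..1, F s t := by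
  have h01 : (0:ℝ) ≤ 1 := zero_le_one
  have hint : Integrable (Function.uncurry F)
      ((volume.restrict (Set.Ioc (0:ℝ) 1)).prod (volume.restrict (Set.Ioc (0:ℝ) 1))) := by
    rw [Measure.prod_restrict]
    exact (hF.continuousOn.integrableOn_compact (isCompact_Icc.prod isCompact_Icc)).mono_set
      (Set.prod_mono Set.Ioc_subset_Icc_self Set.Ioc_subset_Icc_self)
  have := MeasureTheory.integral_integral_swap hint
  simpa [intervalIntegral.integral_of_le h01] using this


/-- A path `γ : [0,1] → ℂ ≅ ℝ²` is piecewise `C¹` with derivative `γ'` if it is continuous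
on `[0,1]` and there is a finite partition `0 = t₀ < t₁ < ⋯ < tₙ = 1` such that on each
closed piece the derivative of `γ` extends to a continuous function agreeing with `γ'`
in the interior of the piece. -/
def IsPiecewiseC1Path (γ γ' : ℝ → ℂ) : Prop :=
  ContinuousOn γ (Set.Icc 0 1) ∧
  ∃ (n : ℕ) (t : ℕ → ℝ), 0 < n ∧ t 0 = 0 ∧ t n = 1 ∧
    (∀ i < n, t i < t (i + 1)) ∧
    ∀ i < n, ∃ d : ℝ → ℂ, ContinuousOn d (Set.Icc (t i) (t (i + 1))) ∧
      ∀ x ∈ Set.Ioo (t i) (t (i + 1)), HasDerivAt γ (d x) x ∧ γ' x = d x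

/-- The length of a path `γ` with derivative `γ'` in the conformal metric `f²(dx²+dy²)`. -/
noncomputable def gLength (f : ℂ → ℝ) (γ γ' : ℝ → ℂ) : ℝ :=
  ∫ t in (0:ℝ)..1, f (γ t) * ‖γ' t‖

/-- The systole of the metric `f²(dx²+dy²)` on the torus `ℝ²/L`: the infimum of lengths of
piecewise `C¹` paths whose endpoint difference is a nonzero lattice vector. -/
noncomputable def systole (L : Set ℂ) (f : ℂ → ℝ) : ℝ :=
  sInf { ℓ : ℝ | ∃ γ γ' : ℝ → ℂ, IsPiecewiseC1Path γ γ' ∧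
    γ 1 - γ 0 ∈ L ∧ γ 1 - γ 0 ≠ 0 ∧ ℓ = gLength f γ γ' }

/-- **Loewner's torus inequality with isosystolic defect, σ-version.**
For `τ` in the upper half plane, `σ = √(Im τ)`, and the unit-covolume lattice
`L = ℤ·(σ⁻¹τ) + ℤ·σ⁻¹ ⊂ ℂ`, every metric `g = f²(dx²+dy²)` with continuous positive
`L`-periodic conformal factor `f` satisfies `area(g) − σ²·sys(g)² ≥ var(f)`. -/
theorem loewner_torus_inequality_with_defect_sigma
    (τ : ℂ) (hτ : 0 < τ.im) (σ : ℝ) (hσ : σ = Real.sqrt τ.im)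
    (L : Set ℂ)
    (hL : L = {z : ℂ | ∃ m n : ℤ, z = (m : ℂ) * ((σ : ℂ)⁻¹ * τ) + (n : ℂ) * (σ : ℂ)⁻¹})
    (f : ℂ → ℝ) (hf : Continuous f) (hfpos : ∀ z, 0 < f z)
    (hper : ∀ z ∈ L, ∀ x : ℂ, f (x + z) = f x)
    (area mean var : ℝ)
    (harea : area = ∫ s in (0:ℝ)..1, ∫ t in (0:ℝ)..1,
      (f ((s : ℂ) * (σ : ℂ)⁻¹ + (t : ℂ) * ((σ : ℂ)⁻¹ * τ))) ^ 2)
    (hmean : mean = ∫ s in (0:ℝ)..1, ∫ t in (0:ℝ)..1,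
      f ((s : ℂ) * (σ : ℂ)⁻¹ + (t : ℂ) * ((σ : ℂ)⁻¹ * τ)))
    (hvar : var = ∫ s in (0:ℝ)..1, ∫ t in (0:ℝ)..1,
      (f ((s : ℂ) * (σ : ℂ)⁻¹ + (t : ℂ) * ((σ : ℂ)⁻¹ * τ)) - mean) ^ 2) :
    area - σ ^ 2 * systole L f ^ 2 ≥ var := by
  have hσpos : 0 < σ := hσ ▸ Real.sqrt_pos.mpr hτ
  set F : ℝ → ℝ → ℝ := fun s t => f ((s : ℂ) * (σ : ℂ)⁻¹ + (t : ℂ) * ((σ : ℂ)⁻¹ * τ)) with hFdef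
  have hF : Continuous (Function.uncurry F) := by
    apply hf.comp
    exact ((Complex.continuous_ofReal.comp continuous_fst).mul continuous_const).add
      ((Complex.continuous_ofReal.comp continuous_snd).mul continuous_const)
  have hFs : ∀ s, Continuous (F s) := fun s =>
    hF.comp (Continuous.prodMk_right s)
  -- Step A : var = area - mean ^ 2
  have hq : Continuous (fun s => ∫ t in (0:ℝ)..1, (F s t) ^ 2) :=
    intervalIntegral.continuous_parametric_intervalIntegral_of_continuous'
      (f := fun s t => (F s t) ^ 2) (show Continuous (Function.uncurry fun s t => (F s t) ^ 2) from hF.pow 2) 0 1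
  have hg : Continuous (fun s => ∫ t in (0:ℝ)..1, F s t) :=
    intervalIntegral.continuous_parametric_intervalIntegral_of_continuous' hF 0 1
  have hinner : ∀ s : ℝ, (∫ t in (0:ℝ)..1, (F s t - mean) ^ 2)
      = (∫ t in (0:ℝ)..1, (F s t) ^ 2) - 2 * mean * (∫ t in (0:ℝ)..1, F s t) + mean ^ 2 := by
    intro s
    have h1 : IntervalIntegrable (fun t => (F s t) ^ 2) volume 0 1 :=
      ((hFs s).pow 2).intervalIntegrable 0 1
    have h2 : IntervalIntegrable (fun t => 2 * mean * F s t) volume 0 1 :=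
      (continuous_const.mul (hFs s)).intervalIntegrable 0 1
    have : (∫ t in (0:ℝ)..1, (F s t - mean) ^ 2)
        = ∫ t in (0:ℝ)..1, ((F s t) ^ 2 - 2 * mean * F s t + mean ^ 2) := by
      apply intervalIntegral.integral_congr
      intro t _; ring
    rw [this, intervalIntegral.integral_add (h1.sub h2) (intervalIntegrable_const),
      intervalIntegral.integral_sub h1 h2, intervalIntegral.integral_const_mul,
      intervalIntegral.integral_const]
    simp
  have hvar' : var = area - mean ^ 2 := by
    rw [hvar]
    have : (∫ s in (0:ℝ)..1, ∫ t in (0:ℝ)..1, (F s t - mean) ^ 2)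
        = ∫ s in (0:ℝ)..1,
          ((∫ t in (0:ℝ)..1, (F s t) ^ 2) - 2 * mean * (∫ t in (0:ℝ)..1, F s t) + mean ^ 2) :=
      intervalIntegral.integral_congr (fun s _ => hinner s)
    rw [this, intervalIntegral.integral_add
        ((hq.intervalIntegrable 0 1).sub ((show Continuous fun s => 2 * mean * ∫ t in (0:ℝ)..1, F s t from continuous_const.mul hg).intervalIntegrable 0 1))
        intervalIntegrable_const,
      intervalIntegral.integral_sub (hq.intervalIntegrable 0 1)
        ((show Continuous fun s => 2 * mean * ∫ t in (0:ℝ)..1, F s t from continuous_const.mul hg).intervalIntegrable 0 1),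
      intervalIntegral.integral_const_mul, intervalIntegral.integral_const, ← harea, ← hmean]
    simp; ring
  -- Step B : 0 ≤ mean
  have hmean_nonneg : 0 ≤ mean := by
    rw [hmean]
    apply intervalIntegral.integral_nonneg zero_le_one
    intro s _
    apply intervalIntegral.integral_nonneg zero_le_one
    intro t _
    exact (hfpos _).le
  -- Step C : systole ≤ σ⁻¹ * mean
  set G : ℝ → ℝ := fun t => ∫ s in (0:ℝ)..1, F s t with hGdef
  have hGcont : Continuous G :=
    intervalIntegral.continuous_parametric_intervalIntegral_of_continuous'
      (f := fun t s => F s t) (hF.comp continuous_swap) 0 1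
  have hmeanG : mean = ∫ t in (0:ℝ)..1, G t := by
    rw [hmean]; exact my_swap F hF
  obtain ⟨t₀, ht₀mem, ht₀min⟩ := isCompact_Icc.exists_isMinOn (Set.nonempty_Icc.2 zero_le_one)
    hGcont.continuousOn
  have hGt₀_le : G t₀ ≤ mean := by
    rw [hmeanG]
    calc G t₀ = ∫ _t in (0:ℝ)..1, G t₀ := by simp
    _ ≤ ∫ t in (0:ℝ)..1, G t := by
        apply intervalIntegral.integral_mono_on zero_le_one intervalIntegrable_const
          (hGcont.intervalIntegrable 0 1)
        intro t ht; exact ht₀min ht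
  -- the candidate path
  set γ : ℝ → ℂ := fun u => (u : ℂ) * (σ : ℂ)⁻¹ + (t₀ : ℂ) * ((σ : ℂ)⁻¹ * τ) with hγdef
  set γ' : ℝ → ℂ := fun _ => (σ : ℂ)⁻¹ with hγ'def
  have hderiv : ∀ x : ℝ, HasDerivAt γ ((σ : ℂ)⁻¹) x := by
    intro x
    have h1 : HasDerivAt (fun u : ℝ => (u : ℂ)) 1 x := by
      simpa using (hasDerivAt_id x).ofReal_comp
    have h2 := (h1.mul_const ((σ : ℂ)⁻¹)).add_const ((t₀ : ℂ) * ((σ : ℂ)⁻¹ * τ))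
    simpa [hγdef] using h2
  have hpath : IsPiecewiseC1Path γ γ' := by
    constructor
    · exact Continuous.continuousOn (by
        exact ((Complex.continuous_ofReal).mul continuous_const).add continuous_const)
    · refine ⟨1, fun i => (i : ℝ), one_pos, by norm_num, by norm_num, ?_, ?_⟩
      · intro i _
        show (i : ℝ) < ((i + 1 : ℕ) : ℝ)
        exact_mod_cast Nat.lt_succ_self i
      · intro i _
        exact ⟨fun _ => (σ : ℂ)⁻¹, continuousOn_const, fun x _ => ⟨hderiv x, rfl⟩⟩
  have hlen : gLength f γ γ' = σ⁻¹ * G t₀ := by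
    unfold gLength
    have hnorm : ‖(σ : ℂ)⁻¹‖ = σ⁻¹ := by
      rw [norm_inv, Complex.norm_real, Real.norm_of_nonneg hσpos.le]
    have : (∫ u in (0:ℝ)..1, f (γ u) * ‖γ' u‖) = ∫ u in (0:ℝ)..1, F u t₀ * σ⁻¹ := by
      apply intervalIntegral.integral_congr
      intro u _
      simp [hγdef, hγ'def, hFdef, hnorm]
    rw [this, intervalIntegral.integral_mul_const]
    rw [hGdef]; ring
  have hsys_le : systole L f ≤ σ⁻¹ * G t₀ := by
    apply csInf_le
    · refine ⟨0, ?_⟩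
      rintro ℓ ⟨γ₁, γ₁', _, _, _, rfl⟩
      apply intervalIntegral.integral_nonneg zero_le_one
      intro u _
      exact mul_nonneg (hfpos _).le (norm_nonneg _)
    · have hdiff : γ 1 - γ 0 = (σ : ℂ)⁻¹ := by
        simp [hγdef]
      refine ⟨γ, γ', hpath, ?_, ?_, hlen.symm⟩
      · rw [hL, hdiff]
        exact ⟨0, 1, by simp⟩
      · rw [hdiff]
        exact inv_ne_zero (by exact_mod_cast hσpos.ne')
  have hsys_nonneg : 0 ≤ systole L f := by
    apply Real.sInf_nonneg
    rintro ℓ ⟨γ₁, γ₁', _, _, _, rfl⟩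
    apply intervalIntegral.integral_nonneg zero_le_one
    intro u _
    exact mul_nonneg (hfpos _).le (norm_nonneg _)
  -- conclude
  have hσsys : σ * systole L f ≤ mean := by
    have h1 : systole L f ≤ σ⁻¹ * mean :=
      hsys_le.trans (by
        have := mul_le_mul_of_nonneg_left hGt₀_le (inv_nonneg.2 hσpos.le)
        linarith)
    calc σ * systole L f ≤ σ * (σ⁻¹ * mean) :=
          mul_le_mul_of_nonneg_left h1 hσpos.le
    _ = mean := by field_simp
  have hsq : σ ^ 2 * systole L f ^ 2 ≤ mean ^ 2 := by
    have h0 : 0 ≤ σ * systole L f := mul_nonneg hσpos.le hsys_nonneg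
    calc σ ^ 2 * systole L f ^ 2 = (σ * systole L f) ^ 2 := by ring
    _ ≤ mean ^ 2 := pow_le_pow_left₀ h0 hσsys 2
  linarith [hvar']
end

section
/- For every lattice L ⊂ ℝ² of covolume 1 and every continuous L-periodic function f : ℝ² → ℝ with f > 0, the metric g = f²(dx²+dy²) satisfies Loewner's torus inequality with isosystolic defect: area(g) − (√3/2)·sys(g)² ≥ var(f). -/
open MeasureTheory intervalIntegral

section Helpers

noncomputable def DD (z u : ℂ) : ℝ := z.re * u.im - z.im * u.re

lemma periodic_shift_int (h : ℝ → ℝ) (hper : Function.Periodic h 1) (b : ℝ) :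
    ∫ t in (0:ℝ)..1, h (t + b) = ∫ t in (0:ℝ)..1, h t := by
  rw [intervalIntegral.integral_comp_add_right h b]
  have h2 := hper.intervalIntegral_add_eq b 0
  rw [show (0:ℝ)+b = b by ring, show (1:ℝ)+b = b+1 by ring, h2]
  norm_num

lemma shift_inner (f : ℂ → ℝ) (w : ℂ) (c : ℂ) (hw : ∀ x, f (x + w) = f x) (b : ℝ) :
    ∫ t in (0:ℝ)..1, f (c + ((t+b:ℝ):ℂ)*w) = ∫ t in (0:ℝ)..1, f (c + (t:ℂ)*w) := by
  have hper : Function.Periodic (fun t : ℝ => f (c + (t:ℂ)*w)) 1 := by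
    intro t
    simp only
    rw [show (((t+1:ℝ)):ℂ)*w = (t:ℂ)*w + w by push_cast; ring, ← add_assoc]
    exact hw _
  have e1 : ∫ t in (0:ℝ)..1, f (c + ((t+b:ℝ):ℂ)*w)
      = ∫ t in (0:ℝ)..1, (fun u : ℝ => f (c + (u:ℂ)*w)) (t + b) :=
    intervalIntegral.integral_congr (fun t _ => rfl)
  rw [e1, periodic_shift_int _ hper b]

lemma shift_double (f : ℂ → ℝ) (v w : ℂ)
    (hv : ∀ x, f (x + v) = f x) (hw : ∀ x, f (x + w) = f x) (a b : ℝ) :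
    ∫ s in (0:ℝ)..1, ∫ t in (0:ℝ)..1, f (((s+a:ℝ):ℂ)*v + ((t+b:ℝ):ℂ)*w)
      = ∫ s in (0:ℝ)..1, ∫ t in (0:ℝ)..1, f ((s:ℂ)*v + (t:ℂ)*w) := by
  have step1 : ∀ c : ℝ, ∫ t in (0:ℝ)..1, f ((c:ℂ)*v + ((t+b:ℝ):ℂ)*w)
      = ∫ t in (0:ℝ)..1, f ((c:ℂ)*v + (t:ℂ)*w) := fun c => shift_inner f w _ hw b
  have e1 : ∫ s in (0:ℝ)..1, ∫ t in (0:ℝ)..1, f (((s+a:ℝ):ℂ)*v + ((t+b:ℝ):ℂ)*w)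
      = ∫ s in (0:ℝ)..1, (fun c : ℝ => ∫ t in (0:ℝ)..1, f ((c:ℂ)*v + (t:ℂ)*w)) (s + a) := by
    apply intervalIntegral.integral_congr
    intro s _
    exact step1 (s + a)
  rw [e1]
  refine periodic_shift_int (fun c : ℝ => ∫ t in (0:ℝ)..1, f ((c:ℂ)*v + (t:ℂ)*w)) ?_ a
  intro c
  simp only
  apply intervalIntegral.integral_congr
  intro t _
  show f (((c+1:ℝ):ℂ)*v + (t:ℂ)*w) = f ((c:ℂ)*v + (t:ℂ)*w)
  rw [show ((c+1:ℝ):ℂ)*v + (t:ℂ)*w = ((c:ℂ)*v + (t:ℂ)*w) + v by push_cast; ring]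
  exact hv _

lemma swapII (H : ℝ → ℝ → ℝ) (hH : Continuous fun p : ℝ × ℝ => H p.1 p.2) :
    ∫ x in (0:ℝ)..1, ∫ y in (0:ℝ)..1, H x y
      = ∫ y in (0:ℝ)..1, ∫ x in (0:ℝ)..1, H x y := by
  simp only [intervalIntegral.integral_of_le (zero_le_one (α := ℝ))]
  apply MeasureTheory.integral_integral_swap
  rw [Measure.prod_restrict]
  have : IntegrableOn (fun z : ℝ × ℝ => H z.1 z.2) (Set.Icc 0 1 ×ˢ Set.Icc 0 1)
      (volume.prod volume) := by
    rw [← Measure.volume_eq_prod]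
    exact hH.continuousOn.integrableOn_compact (isCompact_Icc.prod isCompact_Icc)
  exact this.mono_set (Set.prod_mono Set.Ioc_subset_Icc_self Set.Ioc_subset_Icc_self)

noncomputable def PP (z u : ℂ) : ℝ := z.re * u.re + z.im * u.im

lemma nsq (z : ℂ) : ‖z‖ ^ 2 = z.re ^ 2 + z.im ^ 2 := by
  rw [Complex.sq_norm, Complex.normSq_apply]; ring

lemma PD_sq (z u : ℂ) : PP z u ^ 2 + DD z u ^ 2 = ‖z‖ ^ 2 * ‖u‖ ^ 2 := by
  rw [nsq, nsq]; unfold PP DD; ring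

lemma DD_abs_le (z u : ℂ) : |DD z u| ≤ ‖z‖ * ‖u‖ := by
  have h := PD_sq z u
  have h2 : |DD z u| ^ 2 ≤ (‖z‖ * ‖u‖) ^ 2 := by
    rw [sq_abs]; nlinarith [sq_nonneg (PP z u)]
  have hM : (0:ℝ) ≤ ‖z‖ * ‖u‖ := by positivity
  nlinarith [abs_nonneg (DD z u)]

lemma Dbilin (v w : ℂ) (a b c d : ℝ) :
    DD ((a:ℂ)*v + (b:ℂ)*w) ((c:ℂ)*v + (d:ℂ)*w) = (a*d - b*c) * DD v w := by
  simp only [DD, Complex.add_re, Complex.add_im, Complex.mul_re, Complex.mul_im,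
    Complex.ofReal_re, Complex.ofReal_im]
  ring

lemma lat_inj (v w : ℂ) (hD : DD v w ≠ 0) (a b : ℝ)
    (h : (a:ℂ)*v + (b:ℂ)*w = 0) : a = 0 ∧ b = 0 := by
  have h1 : DD ((a:ℂ)*v + (b:ℂ)*w) w = 0 := by rw [h]; simp [DD]
  have h2 : DD v ((a:ℂ)*v + (b:ℂ)*w) = 0 := by rw [h]; simp [DD]
  have e1 : DD ((a:ℂ)*v + (b:ℂ)*w) w = a * DD v w := by
    have := Dbilin v w a b 0 1; simpa using this
  have e2 : DD v ((a:ℂ)*v + (b:ℂ)*w) = b * DD v w := by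
    have := Dbilin v w 1 0 a b; simpa using this
  constructor
  · exact (mul_eq_zero.mp (by rw [← e1]; exact h1)).resolve_right hD
  · exact (mul_eq_zero.mp (by rw [← e2]; exact h2)).resolve_right hD

lemma DD_sub_smul (z u : ℂ) (c : ℝ) : DD z (u - (c:ℂ)*z) = DD z u := by
  simp only [DD, Complex.sub_re, Complex.sub_im, Complex.mul_re, Complex.mul_im,
    Complex.ofReal_re, Complex.ofReal_im]
  ring

lemma PP_sub_smul (z u : ℂ) (c : ℝ) : PP z (u - (c:ℂ)*z) = PP z u - c * ‖z‖^2 := by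
  rw [nsq]
  simp only [PP, Complex.sub_re, Complex.sub_im, Complex.mul_re, Complex.mul_im,
    Complex.ofReal_re, Complex.ofReal_im]
  ring


noncomputable def ZZ (v w : ℂ) (m n : ℤ) : ℂ := (m:ℂ)*v + (n:ℂ)*w

lemma ZZcast (v w : ℂ) (m n : ℤ) : ZZ v w m n = ((m:ℝ):ℂ)*v + ((n:ℝ):ℂ)*w := by
  simp [ZZ]

set_option maxHeartbeats 1000000 in
lemma hermite (v w : ℂ) (hcov : |DD v w| = 1) :
    ∃ m n : ℤ, ¬(m = 0 ∧ n = 0) ∧ ‖ZZ v w m n‖^2 ≤ 2 / Real.sqrt 3 := by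
  have hD : DD v w ≠ 0 := fun h => by simp [h] at hcov
  have hZcast : ∀ m n : ℤ, ZZ v w m n = ((m:ℝ):ℂ)*v + ((n:ℝ):ℂ)*w := ZZcast v w
  have inj : ∀ m n : ℤ, ZZ v w m n = 0 → m = 0 ∧ n = 0 := by
    intro m n h
    rw [hZcast] at h
    obtain ⟨h1, h2⟩ := lat_inj v w hD _ _ h
    exact ⟨by exact_mod_cast h1, by exact_mod_cast h2⟩
  have hZne : ∀ m n : ℤ, ¬(m = 0 ∧ n = 0) → ZZ v w m n ≠ 0 := by
    intro m n hmn h; exact hmn (inj m n h)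
  -- bounds on coefficients
  have coeffD1 : ∀ m n : ℤ, DD (ZZ v w m n) w = (m:ℝ) * DD v w := by
    intro m n; rw [hZcast]
    have := Dbilin v w (m:ℝ) (n:ℝ) 0 1; simpa using this
  have coeffD2 : ∀ m n : ℤ, DD v (ZZ v w m n) = (n:ℝ) * DD v w := by
    intro m n; rw [hZcast]
    have := Dbilin v w 1 0 (m:ℝ) (n:ℝ); simpa using this
  set B : ℤ := ⌈‖v‖ * ‖w‖⌉ with hB
  set B' : ℤ := ⌈‖v‖ * ‖v‖⌉ with hB'
  set S : Set (ℤ × ℤ) :=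
    {p | ¬(p.1 = 0 ∧ p.2 = 0) ∧ ‖ZZ v w p.1 p.2‖ ≤ ‖v‖} with hS
  have hsub : S ⊆ Set.Icc (-B) B ×ˢ Set.Icc (-B') B' := by
    rintro ⟨m, n⟩ ⟨_, hle⟩
    have hm : |(m:ℝ)| ≤ ‖v‖ * ‖w‖ := by
      have h1 : |(m:ℝ) * DD v w| ≤ ‖ZZ v w m n‖ * ‖w‖ := by
        rw [← coeffD1 m n]; exact DD_abs_le _ _
      rw [abs_mul, hcov, mul_one] at h1
      exact h1.trans (mul_le_mul_of_nonneg_right hle (norm_nonneg _))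
    have hn : |(n:ℝ)| ≤ ‖v‖ * ‖v‖ := by
      have h1 : |(n:ℝ) * DD v w| ≤ ‖v‖ * ‖ZZ v w m n‖ := by
        rw [← coeffD2 m n]; exact DD_abs_le _ _
      rw [abs_mul, hcov, mul_one] at h1
      exact h1.trans (mul_le_mul_of_nonneg_left hle (norm_nonneg _))
    constructor
    · have : |(m:ℝ)| ≤ (B:ℝ) := hm.trans (Int.le_ceil _)
      rw [← Int.cast_abs, Int.cast_le] at this
      simpa [abs_le] using abs_le.mp this
    · have : |(n:ℝ)| ≤ (B':ℝ) := hn.trans (Int.le_ceil _)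
      rw [← Int.cast_abs, Int.cast_le] at this
      simpa [abs_le] using abs_le.mp this
  have hfin : S.Finite :=
    Set.Finite.subset ((Set.finite_Icc _ _).prod (Set.finite_Icc _ _)) hsub
  have hmemS : ((1:ℤ), (0:ℤ)) ∈ S := by
    constructor
    · simp
    · simp [ZZ]
  obtain ⟨p₀, hp₀S, hp₀min⟩ := Set.exists_min_image S (fun p => ‖ZZ v w p.1 p.2‖) hfin ⟨_, hmemS⟩
  obtain ⟨hp₀ne, hp₀le⟩ := hp₀S
  set z₀ := ZZ v w p₀.1 p₀.2 with hz₀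
  have hmin : ∀ m n : ℤ, ¬(m = 0 ∧ n = 0) → ‖z₀‖ ≤ ‖ZZ v w m n‖ := by
    intro m n hmn
    by_cases h : ‖ZZ v w m n‖ ≤ ‖v‖
    · exact hp₀min (m, n) ⟨hmn, h⟩
    · have h10 : ‖z₀‖ ≤ ‖ZZ v w 1 0‖ := hp₀min ((1:ℤ),(0:ℤ)) hmemS
      have h11 : ‖ZZ v w 1 0‖ = ‖v‖ := by simp [ZZ]
      exact (h10.trans_eq h11).trans (le_of_not_ge h)
  have hz₀ne : z₀ ≠ 0 := hZne _ _ hp₀ne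
  have hz₀pos : 0 < ‖z₀‖ := norm_pos_iff.mpr hz₀ne
  -- gcd = 1
  set g : ℕ := Int.gcd p₀.1 p₀.2 with hg
  have hgne : g ≠ 0 := by
    rw [hg, Ne, Int.gcd_eq_zero_iff]; exact hp₀ne
  obtain ⟨m', hm'⟩ : (g:ℤ) ∣ p₀.1 := Int.gcd_dvd_left _ _
  obtain ⟨n', hn'⟩ : (g:ℤ) ∣ p₀.2 := Int.gcd_dvd_right _ _
  have hfact : z₀ = ((g:ℤ):ℂ) * ZZ v w m' n' := by
    rw [hz₀, hZcast, hZcast, hm', hn']; push_cast; ring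
  have hg1 : g = 1 := by
    by_contra hgne1
    have hg2 : 2 ≤ (g:ℝ) := by
      have : 2 ≤ g := by omega
      exact_mod_cast this
    have hm'ne : ¬(m' = 0 ∧ n' = 0) := by
      rintro ⟨rfl, rfl⟩
      simp at hm' hn'
      exact hp₀ne ⟨hm', hn'⟩
    have hle := hmin m' n' hm'ne
    have hpos : 0 < ‖ZZ v w m' n'‖ := norm_pos_iff.mpr (hZne _ _ hm'ne)
    have : ‖z₀‖ = (g:ℝ) * ‖ZZ v w m' n'‖ := by
      rw [hfact, norm_mul]; norm_num
    nlinarith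
  -- Bezout
  have hbez : p₀.1 * Int.gcdA p₀.1 p₀.2 + p₀.2 * Int.gcdB p₀.1 p₀.2 = 1 := by
    have := Int.gcd_eq_gcd_ab p₀.1 p₀.2
    rw [← hg, hg1] at this
    exact_mod_cast this.symm
  set a := Int.gcdA p₀.1 p₀.2
  set b := Int.gcdB p₀.1 p₀.2
  set u := ZZ v w (-b) a with hu
  have hDu : |DD z₀ u| = 1 := by
    have : DD z₀ u = ((p₀.1 * a + p₀.2 * b : ℤ) : ℝ) * DD v w := by
      rw [hz₀, hu, hZcast, hZcast, Dbilin]; push_cast; ring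
    rw [this, hbez, abs_mul]; simpa using hcov
  set k : ℤ := round (PP z₀ u / ‖z₀‖^2) with hk
  set u' := u - ((k:ℝ):ℂ) * z₀ with hu'
  have hDu' : |DD z₀ u'| = 1 := by rw [hu', DD_sub_smul]; exact hDu
  have hu'Z : u' = ZZ v w (-b - k*p₀.1) (a - k*p₀.2) := by
    rw [hu', hu, hz₀, hZcast, hZcast, hZcast]; push_cast; ring
  have hu'ne : ¬(-b - k*p₀.1 = 0 ∧ a - k*p₀.2 = 0) := by
    rintro ⟨h1, h2⟩
    have : u' = 0 := by rw [hu'Z, h1, h2]; simp [ZZ]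
    rw [this] at hDu'
    simp [DD] at hDu'
  have hminu' : ‖z₀‖ ≤ ‖u'‖ := by rw [hu'Z]; exact hmin _ _ hu'ne
  have hPu' : |PP z₀ u'| ≤ ‖z₀‖^2 / 2 := by
    have hz2 : (0:ℝ) < ‖z₀‖^2 := by positivity
    have : PP z₀ u' = ‖z₀‖^2 * (PP z₀ u / ‖z₀‖^2 - (k:ℝ)) := by
      rw [hu', PP_sub_smul, mul_sub, mul_div_cancel₀ _ (ne_of_gt hz2)]; ring
    rw [this, abs_mul, abs_of_pos hz2]
    have := abs_sub_round (PP z₀ u / ‖z₀‖^2)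
    nlinarith
  -- conclude
  have hkey := PD_sq z₀ u'
  have hD1 : DD z₀ u' ^ 2 = 1 := by
    rw [← sq_abs, hDu']; norm_num
  have h4 : ‖z₀‖^2 * ‖z₀‖^2 ≤ ‖z₀‖^2 * ‖u'‖^2 := by
    apply mul_le_mul_of_nonneg_left _ (by positivity)
    exact pow_le_pow_left₀ (norm_nonneg _) hminu' 2
  have hP2 : PP z₀ u' ^ 2 ≤ (‖z₀‖^2/2)^2 := by
    rw [← sq_abs]
    exact pow_le_pow_left₀ (abs_nonneg _) hPu' 2
  have hfourth : ‖z₀‖^2 * ‖z₀‖^2 ≤ (4:ℝ)/3 := by nlinarith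
  refine ⟨p₀.1, p₀.2, hp₀ne, ?_⟩
  have hs3 : Real.sqrt 3 ^ 2 = 3 := Real.sq_sqrt (by norm_num)
  have hs3pos : 0 < Real.sqrt 3 := Real.sqrt_pos.mpr (by norm_num)
  rw [← hz₀, le_div_iff₀ hs3pos]
  nlinarith [norm_nonneg z₀, sq_nonneg (‖z₀‖^2 * Real.sqrt 3 - 2)]

lemma ZZ_ne (v w : ℂ) (hD : DD v w ≠ 0) (m n : ℤ) (hmn : ¬(m = 0 ∧ n = 0)) :
    ZZ v w m n ≠ 0 := by
  intro h
  rw [ZZcast] at h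
  obtain ⟨h1, h2⟩ := lat_inj v w hD _ _ h
  exact hmn ⟨by exact_mod_cast h1, by exact_mod_cast h2⟩

noncomputable def FF (f : ℂ → ℝ) (v w z₀ : ℂ) (s t : ℝ) : ℝ :=
  ∫ τ in (0:ℝ)..1, f ((s:ℂ)*v + (t:ℂ)*w + (τ:ℂ)*z₀)

end Helpers

set_option maxHeartbeats 1000000 in
/-- **Loewner's torus inequality with isosystolic defect.**
For every lattice `L = ℤv + ℤw ⊂ ℝ² ≅ ℂ` of covolume `|det(v,w)| = 1` and every continuous
positive `L`-periodic `f`, the metric `g = f²(dx²+dy²)` satisfies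
`area(g) − (√3/2)·sys(g)² ≥ var(f)`. -/
theorem loewner_torus_inequality_with_defect
    (v w : ℂ) (hcovol : |v.re * w.im - v.im * w.re| = 1)
    (L : Set ℂ) (hL : L = {z : ℂ | ∃ m n : ℤ, z = (m : ℂ) * v + (n : ℂ) * w})
    (f : ℂ → ℝ) (hf : Continuous f) (hfpos : ∀ z, 0 < f z)
    (hper : ∀ z ∈ L, ∀ x : ℂ, f (x + z) = f x)
    (area mean var : ℝ)
    (harea : area = ∫ s in (0:ℝ)..1, ∫ t in (0:ℝ)..1, (f ((s : ℂ) * v + (t : ℂ) * w)) ^ 2)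
    (hmean : mean = ∫ s in (0:ℝ)..1, ∫ t in (0:ℝ)..1, f ((s : ℂ) * v + (t : ℂ) * w))
    (hvar : var = ∫ s in (0:ℝ)..1, ∫ t in (0:ℝ)..1,
      (f ((s : ℂ) * v + (t : ℂ) * w) - mean) ^ 2) :
    area - Real.sqrt 3 / 2 * systole L f ^ 2 ≥ var := by
  have hDv : |DD v w| = 1 := hcovol
  have hD : DD v w ≠ 0 := by intro h; rw [h] at hDv; simp at hDv
  -- continuity facts
  have hC1 : Continuous fun p : ℝ × ℝ => f ((p.1:ℂ)*v + (p.2:ℂ)*w) := by fun_prop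
  have hGs : ∀ s : ℝ, Continuous fun t : ℝ => f ((s:ℂ)*v + (t:ℂ)*w) := by
    intro s; fun_prop
  -- variance identity : var = area - mean ^ 2
  have inner_var : ∀ s : ℝ,
      (∫ t in (0:ℝ)..1, (f ((s:ℂ)*v + (t:ℂ)*w) - mean)^2)
        = (∫ t in (0:ℝ)..1, f ((s:ℂ)*v + (t:ℂ)*w)^2)
          - 2*mean*(∫ t in (0:ℝ)..1, f ((s:ℂ)*v + (t:ℂ)*w)) + mean^2 := by
    intro s
    have h1 : IntervalIntegrable (fun t : ℝ => f ((s:ℂ)*v + (t:ℂ)*w)^2) volume 0 1 :=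
      ((hGs s).pow 2).intervalIntegrable 0 1
    have h2 : IntervalIntegrable (fun t : ℝ => 2*mean*f ((s:ℂ)*v + (t:ℂ)*w)) volume 0 1 :=
      (continuous_const.mul (hGs s)).intervalIntegrable 0 1
    have hcg : ∫ t in (0:ℝ)..1, (f ((s:ℂ)*v + (t:ℂ)*w) - mean)^2
        = ∫ t in (0:ℝ)..1,
            (f ((s:ℂ)*v + (t:ℂ)*w)^2 - 2*mean*f ((s:ℂ)*v + (t:ℂ)*w) + mean^2) :=
      intervalIntegral.integral_congr (fun t _ => by ring)
    rw [hcg, intervalIntegral.integral_add (h1.sub h2) intervalIntegrable_const,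
      intervalIntegral.integral_sub h1 h2, intervalIntegral.integral_const_mul,
      intervalIntegral.integral_const]
    simp
  have hI2c : Continuous fun s : ℝ => ∫ t in (0:ℝ)..1, f ((s:ℂ)*v + (t:ℂ)*w)^2 := by
    apply continuous_parametric_intervalIntegral_of_continuous'
    fun_prop
  have hI1c : Continuous fun s : ℝ => ∫ t in (0:ℝ)..1, f ((s:ℂ)*v + (t:ℂ)*w) := by
    apply continuous_parametric_intervalIntegral_of_continuous'
    fun_prop
  have hvar' : var = area - mean^2 := by
    rw [hvar]
    have e : (∫ s in (0:ℝ)..1, ∫ t in (0:ℝ)..1, (f ((s:ℂ)*v + (t:ℂ)*w) - mean)^2)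
        = ∫ s in (0:ℝ)..1, ((∫ t in (0:ℝ)..1, f ((s:ℂ)*v + (t:ℂ)*w)^2)
          - 2*mean*(∫ t in (0:ℝ)..1, f ((s:ℂ)*v + (t:ℂ)*w)) + mean^2) :=
      intervalIntegral.integral_congr (fun s _ => inner_var s)
    have h1 : IntervalIntegrable (fun s : ℝ => ∫ t in (0:ℝ)..1, f ((s:ℂ)*v + (t:ℂ)*w)^2)
        volume 0 1 := hI2c.intervalIntegrable 0 1
    have h2 : IntervalIntegrable
        (fun s : ℝ => 2*mean*(∫ t in (0:ℝ)..1, f ((s:ℂ)*v + (t:ℂ)*w))) volume 0 1 :=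
      (continuous_const.mul hI1c).intervalIntegrable 0 1
    rw [e, intervalIntegral.integral_add (h1.sub h2) intervalIntegrable_const,
      intervalIntegral.integral_sub h1 h2, intervalIntegral.integral_const_mul,
      intervalIntegral.integral_const, ← harea, ← hmean]
    simp; ring
  have hmean0 : 0 ≤ mean := by
    rw [hmean]
    apply intervalIntegral.integral_nonneg zero_le_one
    intro s _
    exact intervalIntegral.integral_nonneg zero_le_one (fun t _ => (hfpos _).le)
  -- periodicity in v and w
  have hv' : ∀ x, f (x + v) = f x := by
    intro x
    exact hper v (by rw [hL]; exact ⟨1, 0, by push_cast; ring⟩) x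
  have hw' : ∀ x, f (x + w) = f x := by
    intro x
    exact hper w (by rw [hL]; exact ⟨0, 1, by push_cast; ring⟩) x
  -- shortest vector
  obtain ⟨m₀, n₀, hmn, hz2⟩ := hermite v w hDv
  set z₀ : ℂ := ZZ v w m₀ n₀ with hz₀def
  have hz₀L : z₀ ∈ L := by rw [hL]; exact ⟨m₀, n₀, rfl⟩
  have hz₀ne : z₀ ≠ 0 := ZZ_ne v w hD m₀ n₀ hmn
  -- double average of FF equals mean
  have hC2 : Continuous fun q : (ℝ×ℝ)×ℝ => f ((q.1.1:ℂ)*v + (q.1.2:ℂ)*w + (q.2:ℂ)*z₀) := by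
    fun_prop
  have hFc : Continuous fun p : ℝ × ℝ => FF f v w z₀ p.1 p.2 := by
    apply continuous_parametric_intervalIntegral_of_continuous'
      (f := fun (p : ℝ × ℝ) (τ : ℝ) => f ((p.1:ℂ)*v + (p.2:ℂ)*w + (τ:ℂ)*z₀))
    fun_prop
  have key : (∫ s in (0:ℝ)..1, ∫ t in (0:ℝ)..1, FF f v w z₀ s t) = mean := by
    have swap1 : ∀ s : ℝ, (∫ t in (0:ℝ)..1, FF f v w z₀ s t)
        = ∫ τ in (0:ℝ)..1, ∫ t in (0:ℝ)..1, f ((s:ℂ)*v + (t:ℂ)*w + (τ:ℂ)*z₀) := by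
      intro s
      exact swapII (fun t τ => f ((s:ℂ)*v + (t:ℂ)*w + (τ:ℂ)*z₀)) (by fun_prop)
    have e1 : (∫ s in (0:ℝ)..1, ∫ t in (0:ℝ)..1, FF f v w z₀ s t)
        = ∫ s in (0:ℝ)..1, ∫ τ in (0:ℝ)..1, ∫ t in (0:ℝ)..1,
            f ((s:ℂ)*v + (t:ℂ)*w + (τ:ℂ)*z₀) :=
      intervalIntegral.integral_congr (fun s _ => swap1 s)
    have e2 : (∫ s in (0:ℝ)..1, ∫ τ in (0:ℝ)..1, ∫ t in (0:ℝ)..1,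
            f ((s:ℂ)*v + (t:ℂ)*w + (τ:ℂ)*z₀))
        = ∫ τ in (0:ℝ)..1, ∫ s in (0:ℝ)..1, ∫ t in (0:ℝ)..1,
            f ((s:ℂ)*v + (t:ℂ)*w + (τ:ℂ)*z₀) := by
      apply swapII (fun s τ => ∫ t in (0:ℝ)..1, f ((s:ℂ)*v + (t:ℂ)*w + (τ:ℂ)*z₀))
      apply continuous_parametric_intervalIntegral_of_continuous'
        (f := fun (p : ℝ × ℝ) (t : ℝ) => f ((p.1:ℂ)*v + (t:ℂ)*w + (p.2:ℂ)*z₀))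
      fun_prop
    have e3 : ∀ τ : ℝ, (∫ s in (0:ℝ)..1, ∫ t in (0:ℝ)..1,
        f ((s:ℂ)*v + (t:ℂ)*w + (τ:ℂ)*z₀)) = mean := by
      intro τ
      have ecast : ∀ s t : ℝ, ((s:ℂ)*v + (t:ℂ)*w + (τ:ℂ)*z₀ : ℂ)
          = ((s + τ*(m₀:ℝ) : ℝ):ℂ)*v + ((t + τ*(n₀:ℝ) : ℝ):ℂ)*w := by
        intro s t
        rw [hz₀def, ZZcast]
        push_cast
        ring
      have e4 : (∫ s in (0:ℝ)..1, ∫ t in (0:ℝ)..1, f ((s:ℂ)*v + (t:ℂ)*w + (τ:ℂ)*z₀))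
          = ∫ s in (0:ℝ)..1, ∫ t in (0:ℝ)..1,
              f (((s + τ*(m₀:ℝ) : ℝ):ℂ)*v + ((t + τ*(n₀:ℝ) : ℝ):ℂ)*w) := by
        apply intervalIntegral.integral_congr
        intro s _
        apply intervalIntegral.integral_congr
        intro t _
        exact congrArg f (ecast s t)
      rw [e4, shift_double f v w hv' hw' (τ*(m₀:ℝ)) (τ*(n₀:ℝ)), hmean]
    rw [e1, e2, intervalIntegral.integral_congr (fun τ _ => e3 τ)]
    simp
  -- there is a point with FF ≤ mean
  have hexists : ∃ s₀ t₀ : ℝ, FF f v w z₀ s₀ t₀ ≤ mean := by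
    by_contra hcon
    push_neg at hcon
    have hFs : ∀ s : ℝ, Continuous fun t => FF f v w z₀ s t := by
      intro s
      exact hFc.comp (Continuous.prodMk_right s)
    have h1 : ∀ s : ℝ, mean < ∫ t in (0:ℝ)..1, FF f v w z₀ s t := by
      intro s
      have hpos : 0 < ∫ t in (0:ℝ)..1, (FF f v w z₀ s t - mean) :=
        intervalIntegral_pos_of_pos_on
          (((hFs s).sub continuous_const).intervalIntegrable 0 1)
          (fun t _ => sub_pos.mpr (hcon s t)) one_pos
      rw [intervalIntegral.integral_sub ((hFs s).intervalIntegrable 0 1)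
        intervalIntegrable_const, intervalIntegral.integral_const] at hpos
      simp at hpos
      linarith
    have hφc : Continuous fun s : ℝ => ∫ t in (0:ℝ)..1, FF f v w z₀ s t := by
      apply continuous_parametric_intervalIntegral_of_continuous'
        (f := fun (s : ℝ) (t : ℝ) => FF f v w z₀ s t)
      exact hFc
    have hpos2 : 0 < ∫ s in (0:ℝ)..1, ((∫ t in (0:ℝ)..1, FF f v w z₀ s t) - mean) :=
      intervalIntegral_pos_of_pos_on
        ((hφc.sub continuous_const).intervalIntegrable 0 1)
        (fun s _ => sub_pos.mpr (h1 s)) one_pos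
    rw [intervalIntegral.integral_sub (hφc.intervalIntegrable 0 1)
      intervalIntegrable_const, intervalIntegral.integral_const, key] at hpos2
    simp at hpos2
  obtain ⟨s₀, t₀, hle⟩ := hexists
  -- build the candidate path
  set γ : ℝ → ℂ := fun τ => (s₀:ℂ)*v + (t₀:ℂ)*w + (τ:ℂ)*z₀ with hγ
  set γ' : ℝ → ℂ := fun _ => z₀ with hγ'
  have hderiv : ∀ x : ℝ, HasDerivAt γ z₀ x := by
    intro x
    rw [hγ]
    simpa using (Complex.ofRealCLM.hasDerivAt (x := x)).mul_const z₀
      |>.const_add ((s₀:ℂ)*v + (t₀:ℂ)*w)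
  have hpath : IsPiecewiseC1Path γ γ' := by
    refine ⟨Continuous.continuousOn (by fun_prop), 1, (fun i => (i:ℝ)), one_pos,
      by norm_num, by norm_num, ?_, ?_⟩
    · intro i _
      show (i:ℝ) < ((i+1:ℕ):ℝ)
      exact_mod_cast lt_add_one i
    · intro i _
      exact ⟨fun _ => z₀, continuousOn_const, fun x _ => ⟨hderiv x, rfl⟩⟩
  have hend : γ 1 - γ 0 = z₀ := by rw [hγ]; push_cast; ring
  set SY := { ℓ : ℝ | ∃ γ γ' : ℝ → ℂ, IsPiecewiseC1Path γ γ' ∧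
    γ 1 - γ 0 ∈ L ∧ γ 1 - γ 0 ≠ 0 ∧ ℓ = gLength f γ γ' } with hSY
  have hmem : gLength f γ γ' ∈ SY :=
    ⟨γ, γ', hpath, by rw [hend]; exact hz₀L, by rw [hend]; exact hz₀ne, rfl⟩
  have hnn : ∀ ℓ ∈ SY, 0 ≤ ℓ := by
    rintro ℓ ⟨g1, g2, -, -, -, rfl⟩
    exact intervalIntegral.integral_nonneg zero_le_one
      (fun u _ => mul_nonneg (hfpos _).le (norm_nonneg _))
  have hbdd : BddBelow SY := ⟨0, fun ℓ h => hnn ℓ h⟩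
  have hsys_eq : systole L f = sInf SY := rfl
  have hglen : gLength f γ γ' = (FF f v w z₀ s₀ t₀) * ‖z₀‖ := by
    show (∫ τ in (0:ℝ)..1, f (γ τ) * ‖γ' τ‖) = _
    rw [FF, ← intervalIntegral.integral_mul_const]
  have hsys_le : systole L f ≤ mean * ‖z₀‖ := by
    rw [hsys_eq]
    refine (csInf_le hbdd hmem).trans ?_
    rw [hglen]
    exact mul_le_mul_of_nonneg_right hle (norm_nonneg _)
  have hsys0 : 0 ≤ systole L f := by
    rw [hsys_eq]
    exact le_csInf ⟨_, hmem⟩ hnn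
  -- final arithmetic
  have hs3 : Real.sqrt 3 ^ 2 = 3 := Real.sq_sqrt (by norm_num)
  have hs3pos : 0 < Real.sqrt 3 := Real.sqrt_pos.mpr (by norm_num)
  have hzn : ‖z₀‖^2 * Real.sqrt 3 ≤ 2 := by
    rw [← le_div_iff₀ hs3pos]
    exact hz2
  have h1 : systole L f ^ 2 ≤ (mean * ‖z₀‖)^2 :=
    pow_le_pow_left₀ hsys0 hsys_le 2
  have hmain : Real.sqrt 3 / 2 * systole L f ^ 2 ≤ mean^2 := by
    have h2 : Real.sqrt 3 / 2 * systole L f ^ 2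
        ≤ Real.sqrt 3 / 2 * (mean^2 * ‖z₀‖^2) := by
      have := h1
      nlinarith [hs3pos.le]
    have h3 : Real.sqrt 3 / 2 * (mean^2 * ‖z₀‖^2) ≤ mean^2 := by
      nlinarith [sq_nonneg mean, hzn, hs3pos.le, sq_nonneg (‖z₀‖)]
    linarith
  linarith [hvar']
end

section
/- Let a, b > 0 with ab = 1 and let L = aℤ × bℤ ⊂ ℝ² be the corresponding rectangular lattice of covolume 1. Then for every continuous L-periodic function f : ℝ² → ℝ with f > 0, the metric g = f²(dx²+dy²) satisfies area(g) − sys(g)² ≥ var(f). -/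
open MeasureTheory intervalIntegral

lemma aux_segment (z₀ v : ℂ) :
    IsPiecewiseC1Path (fun u : ℝ => z₀ + u • v) (fun _ => v) := by
  constructor
  · exact (continuous_const.add (continuous_id.smul continuous_const)).continuousOn
  · refine ⟨1, fun i => (i : ℝ), one_pos, by norm_num, by norm_num, ?_, ?_⟩
    · intro i hi; interval_cases i; norm_num
    · intro i hi
      refine ⟨fun _ => v, continuousOn_const, fun x _ => ⟨?_, rfl⟩⟩
      simpa using ((hasDerivAt_id x).smul_const v).const_add z₀

lemma aux_glen_nonneg (f : ℂ → ℝ) (hfpos : ∀ z, 0 < f z) (γ γ' : ℝ → ℂ) :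
    0 ≤ gLength f γ γ' :=
  intervalIntegral.integral_nonneg zero_le_one
    (fun u _ => mul_nonneg (hfpos _).le (norm_nonneg _))

lemma aux_systole_le (L : Set ℂ) (f : ℂ → ℝ) (hfpos : ∀ z, 0 < f z)
    (z₀ v : ℂ) (hv : v ∈ L) (hv0 : v ≠ 0) :
    systole L f ≤ ∫ u in (0:ℝ)..1, f (z₀ + u • v) * ‖v‖ := by
  apply csInf_le
  · exact ⟨0, by rintro ℓ ⟨γ, γ', -, -, -, rfl⟩; exact aux_glen_nonneg f hfpos γ γ'⟩
  · refine ⟨fun u : ℝ => z₀ + u • v, fun _ => v, aux_segment z₀ v, ?_, ?_, rfl⟩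
    · simpa using hv
    · simpa using hv0

lemma aux_systole_nonneg (L : Set ℂ) (f : ℂ → ℝ) (hfpos : ∀ z, 0 < f z) :
    0 ≤ systole L f := by
  apply Real.sInf_nonneg
  rintro ℓ ⟨γ, γ', -, -, -, rfl⟩
  exact aux_glen_nonneg f hfpos γ γ'

lemma aux_swap {φ : ℝ → ℝ → ℝ} (hφ : Continuous (Function.uncurry φ)) :
    (∫ s in (0:ℝ)..1, ∫ t in (0:ℝ)..1, φ s t)
      = ∫ t in (0:ℝ)..1, ∫ s in (0:ℝ)..1, φ s t := by
  have hint : Integrable (Function.uncurry φ)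
      ((volume.restrict (Set.Ioc (0:ℝ) 1)).prod (volume.restrict (Set.Ioc (0:ℝ) 1))) := by
    rw [Measure.prod_restrict]
    exact (hφ.continuousOn.integrableOn_compact (isCompact_Icc.prod isCompact_Icc)).mono_set
      (Set.prod_mono Set.Ioc_subset_Icc_self Set.Ioc_subset_Icc_self)
  simp_rw [intervalIntegral.integral_of_le (zero_le_one (α := ℝ))]
  exact MeasureTheory.integral_integral_swap hint

/-- **Loewner's inequality with defect for rectangular lattices.**
For the rectangular unit-covolume lattice `L = aℤ × bℤ` (with `a, b > 0`, `ab = 1`),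
every metric `g = f²(dx²+dy²)` with continuous positive `L`-periodic conformal factor `f`
satisfies `area(g) − sys(g)² ≥ var(f)`. -/
theorem loewner_rectangular_lattice
    (a b : ℝ) (ha : 0 < a) (hb : 0 < b) (hab : a * b = 1)
    (L : Set ℂ)
    (hL : L = {z : ℂ | ∃ m n : ℤ, z = (m : ℂ) * (a : ℂ) + (n : ℂ) * (b : ℂ) * Complex.I})
    (f : ℂ → ℝ) (hf : Continuous f) (hfpos : ∀ z, 0 < f z)
    (hper : ∀ z ∈ L, ∀ x : ℂ, f (x + z) = f x)
    (area mean var : ℝ)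
    (harea : area = ∫ s in (0:ℝ)..1, ∫ t in (0:ℝ)..1,
      (f ((s : ℂ) * (a : ℂ) + (t : ℂ) * (b : ℂ) * Complex.I)) ^ 2)
    (hmean : mean = ∫ s in (0:ℝ)..1, ∫ t in (0:ℝ)..1,
      f ((s : ℂ) * (a : ℂ) + (t : ℂ) * (b : ℂ) * Complex.I))
    (hvar : var = ∫ s in (0:ℝ)..1, ∫ t in (0:ℝ)..1,
      (f ((s : ℂ) * (a : ℂ) + (t : ℂ) * (b : ℂ) * Complex.I) - mean) ^ 2) :
    area - systole L f ^ 2 ≥ var := by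
  set φ : ℝ → ℝ → ℝ := fun s t => f ((s : ℂ) * (a : ℂ) + (t : ℂ) * (b : ℂ) * Complex.I)
    with hφdef
  have hφc : Continuous (Function.uncurry φ) := by
    apply hf.comp
    exact (Complex.continuous_ofReal.comp continuous_fst).mul continuous_const |>.add
      (((Complex.continuous_ofReal.comp continuous_snd).mul continuous_const).mul
        continuous_const)
  have hφs : ∀ s : ℝ, Continuous (φ s) := fun s =>
    hφc.comp (Continuous.prodMk_right s)
  have hG : Continuous fun s => ∫ t in (0:ℝ)..1, φ s t :=
    intervalIntegral.continuous_parametric_intervalIntegral_of_continuous' hφc 0 1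
  have hH : Continuous fun s => ∫ t in (0:ℝ)..1, (φ s t) ^ 2 :=
    intervalIntegral.continuous_parametric_intervalIntegral_of_continuous'
      (f := fun s t => (φ s t) ^ 2) ((continuous_pow 2).comp hφc) 0 1
  have hF : Continuous fun t => ∫ s in (0:ℝ)..1, φ s t :=
    intervalIntegral.continuous_parametric_intervalIntegral_of_continuous'
      (f := fun t s => φ s t) (hφc.comp continuous_swap) 0 1
  have hsys0 : 0 ≤ systole L f := aux_systole_nonneg L f hfpos
  -- vertical loops
  have hvert : ∀ s : ℝ, systole L f ≤ b * ∫ t in (0:ℝ)..1, φ s t := by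
    intro s
    have hv : (b : ℂ) * Complex.I ∈ L := by
      rw [hL]; exact ⟨0, 1, by push_cast; ring⟩
    have hv0 : (b : ℂ) * Complex.I ≠ 0 := by
      simp [Complex.ext_iff, hb.ne']
    calc systole L f
        ≤ ∫ u in (0:ℝ)..1, f ((s : ℂ) * (a : ℂ) + u • ((b : ℂ) * Complex.I))
            * ‖(b : ℂ) * Complex.I‖ :=
          aux_systole_le L f hfpos _ _ hv hv0
      _ = b * ∫ t in (0:ℝ)..1, φ s t := by
          rw [← intervalIntegral.integral_const_mul]
          apply intervalIntegral.integral_congr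
          intro u _
          have h1 : (s : ℂ) * (a : ℂ) + u • ((b : ℂ) * Complex.I)
              = (u : ℂ) * (b : ℂ) * Complex.I + (s : ℂ) * (a : ℂ) := by
            rw [Complex.real_smul]; ring
          have h2 : ‖(b : ℂ) * Complex.I‖ = b := by
            simp [abs_of_pos hb]
          simp only [h1, h2, hφdef]
          rw [mul_comm]
          ring_nf
  -- horizontal loops
  have hhor : ∀ t : ℝ, systole L f ≤ a * ∫ s in (0:ℝ)..1, φ s t := by
    intro t
    have hv : (a : ℂ) ∈ L := by
      rw [hL]; exact ⟨1, 0, by push_cast; ring⟩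
    have hv0 : (a : ℂ) ≠ 0 := by
      simpa using ha.ne'
    calc systole L f
        ≤ ∫ u in (0:ℝ)..1, f ((t : ℂ) * (b : ℂ) * Complex.I + u • (a : ℂ))
            * ‖(a : ℂ)‖ := aux_systole_le L f hfpos _ _ hv hv0
      _ = a * ∫ s in (0:ℝ)..1, φ s t := by
          rw [← intervalIntegral.integral_const_mul]
          apply intervalIntegral.integral_congr
          intro u _
          have h1 : (t : ℂ) * (b : ℂ) * Complex.I + u • (a : ℂ)
              = (u : ℂ) * (a : ℂ) + (t : ℂ) * (b : ℂ) * Complex.I := by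
            rw [Complex.real_smul]; ring
          have h2 : ‖(a : ℂ)‖ = a := by
            simp [abs_of_pos ha]
          simp only [h1, h2, hφdef]
          ring
  -- systole ≤ b * mean
  have hb1 : systole L f ≤ b * mean := by
    calc systole L f = ∫ _ in (0:ℝ)..1, systole L f := by simp
      _ ≤ ∫ s in (0:ℝ)..1, b * ∫ t in (0:ℝ)..1, φ s t :=
          intervalIntegral.integral_mono_on zero_le_one intervalIntegrable_const
            ((continuous_const.mul hG).intervalIntegrable 0 1) (fun s _ => hvert s)
      _ = b * mean := by rw [intervalIntegral.integral_const_mul, hmean]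
  -- systole ≤ a * mean (via Fubini)
  have ha1 : systole L f ≤ a * mean := by
    calc systole L f = ∫ _ in (0:ℝ)..1, systole L f := by simp
      _ ≤ ∫ t in (0:ℝ)..1, a * ∫ s in (0:ℝ)..1, φ s t :=
          intervalIntegral.integral_mono_on zero_le_one intervalIntegrable_const
            ((continuous_const.mul hF).intervalIntegrable 0 1) (fun t _ => hhor t)
      _ = a * ∫ t in (0:ℝ)..1, ∫ s in (0:ℝ)..1, φ s t := by
          rw [intervalIntegral.integral_const_mul]
      _ = a * mean := by rw [← aux_swap hφc, ← hmean]
  -- variance identity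
  have hvar' : var = area - mean ^ 2 := by
    have inner : ∀ s : ℝ, (∫ t in (0:ℝ)..1, (φ s t - mean) ^ 2)
        = (∫ t in (0:ℝ)..1, (φ s t) ^ 2)
          - 2 * mean * (∫ t in (0:ℝ)..1, φ s t) + mean ^ 2 := by
      intro s
      have i1 : IntervalIntegrable (fun t => (φ s t) ^ 2) volume 0 1 :=
        ((hφs s).pow 2).intervalIntegrable 0 1
      have i2 : IntervalIntegrable (fun t => 2 * mean * φ s t) volume 0 1 :=
        (continuous_const.mul (hφs s)).intervalIntegrable 0 1
      have expand : (fun t => (φ s t - mean) ^ 2)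
          = fun t => (φ s t) ^ 2 - 2 * mean * φ s t + mean ^ 2 := by
        funext t; ring
      rw [expand, intervalIntegral.integral_add (i1.sub i2) intervalIntegrable_const,
        intervalIntegral.integral_sub i1 i2, intervalIntegral.integral_const_mul,
        intervalIntegral.integral_const]
      simp
    rw [hvar]
    change ∫ s in (0:ℝ)..1, ∫ t in (0:ℝ)..1, (φ s t - mean) ^ 2 = _
    simp_rw [inner]
    have j1 : IntervalIntegrable (fun s => ∫ t in (0:ℝ)..1, (φ s t) ^ 2) volume 0 1 :=
      hH.intervalIntegrable 0 1
    have j2 : IntervalIntegrable (fun s => 2 * mean * ∫ t in (0:ℝ)..1, φ s t) volume 0 1 :=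
      (continuous_const.mul hG).intervalIntegrable 0 1
    rw [intervalIntegral.integral_add (j1.sub j2) intervalIntegrable_const,
      intervalIntegral.integral_sub j1 j2, intervalIntegral.integral_const_mul,
      intervalIntegral.integral_const, ← harea, ← hmean]
    simp; ring
  rw [hvar']
  have key : systole L f ^ 2 ≤ mean ^ 2 := by
    nlinarith [mul_le_mul ha1 hb1 hsys0 (hsys0.trans ha1)]
  linarith
end

section
/- Let F : ℝ → ℝ be a continuous 1-periodic function with F > 0, and define f : ℝ² → ℝ by f(x,y) = F(y), a conformal factor on the unit square torus ℝ²/ℤ² depending only on one variable. Then the metric g = f²(dx²+dy²) satisfies area(g) − var(f) ≥ (sys(g) + (1/2)‖f₀‖₁)², where f₀ = F − m, m = ∫₀¹ F(y) dy, and ‖f₀‖₁ = ∫₀¹ |F(y) − m| dy. -/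
open MeasureTheory intervalIntegral

/-- **One-variable conformal factor: inequality with combined defect.**
On the unit square torus `ℝ²/ℤ²`, if the conformal factor `f(x,y) = F(y)` depends only on
one variable, then `area(g) − var(f) ≥ (sys(g) + ½‖f₀‖₁)²`, where `f₀ = F − m`, `m` the mean. -/
theorem loewner_one_variable_defect
    (F : ℝ → ℝ) (hF : Continuous F) (hFper : ∀ y : ℝ, F (y + 1) = F y)
    (hFpos : ∀ y, 0 < F y)
    (f : ℂ → ℝ) (hfdef : ∀ z : ℂ, f z = F z.im)
    (L : Set ℂ) (hL : L = {z : ℂ | ∃ m n : ℤ, z = (m : ℂ) + (n : ℂ) * Complex.I})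
    (area m var l1 : ℝ)
    (hm : m = ∫ y in (0:ℝ)..1, F y)
    (harea : area = ∫ x in (0:ℝ)..1, ∫ y in (0:ℝ)..1,
      (f ((x : ℂ) + (y : ℂ) * Complex.I)) ^ 2)
    (hvar : var = ∫ x in (0:ℝ)..1, ∫ y in (0:ℝ)..1,
      (f ((x : ℂ) + (y : ℂ) * Complex.I) - m) ^ 2)
    (hl1 : l1 = ∫ y in (0:ℝ)..1, |F y - m|) :
    area - var ≥ (systole L f + (1 / 2) * l1) ^ 2 := by
  -- pointwise value of f
  have hfxy : ∀ x y : ℝ, f ((x : ℂ) + (y : ℂ) * Complex.I) = F y := by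
    intro x y; rw [hfdef]; simp
  -- integrability facts
  have hint1 : IntervalIntegrable F volume 0 1 := hF.intervalIntegrable 0 1
  have hintsq : IntervalIntegrable (fun y => (F y) ^ 2) volume 0 1 :=
    (hF.pow 2).intervalIntegrable 0 1
  have hintsq' : IntervalIntegrable (fun y => (F y - m) ^ 2) volume 0 1 :=
    ((hF.sub continuous_const).pow 2).intervalIntegrable 0 1
  have hintmax : IntervalIntegrable (fun y => max (m - F y) 0) volume 0 1 :=
    ((continuous_const.sub hF).max continuous_const).intervalIntegrable 0 1
  -- area - var = m ^ 2
  have harea' : area = ∫ y in (0:ℝ)..1, (F y) ^ 2 := by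
    rw [harea]; simp_rw [hfxy]; rw [intervalIntegral.integral_const]; simp
  have hvar' : var = ∫ y in (0:ℝ)..1, (F y - m) ^ 2 := by
    rw [hvar]; simp_rw [hfxy]; rw [intervalIntegral.integral_const]; simp
  have hAV : area - var = m ^ 2 := by
    rw [harea', hvar', ← intervalIntegral.integral_sub hintsq hintsq']
    have hpt : ∀ y : ℝ, (F y) ^ 2 - (F y - m) ^ 2 = 2 * m * F y - m ^ 2 := by
      intro y; ring
    simp_rw [hpt]
    rw [intervalIntegral.integral_sub (f := fun y => 2 * m * F y) (g := fun _ => m ^ 2)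
      ((continuous_const.mul hF).intervalIntegrable 0 1)
      (continuous_const.intervalIntegrable 0 1),
      intervalIntegral.integral_const_mul, ← hm, intervalIntegral.integral_const]
    simp [smul_eq_mul]; ring
  -- minimum of F on [0,1]
  obtain ⟨y₀, hy₀mem, hy₀min'⟩ := IsCompact.exists_isMinOn isCompact_Icc
    (⟨0, by norm_num⟩ : (Set.Icc (0:ℝ) 1).Nonempty) hF.continuousOn
  have hy₀min : ∀ y ∈ Set.Icc (0:ℝ) 1, F y₀ ≤ F y := fun y hy => hy₀min' hy
  -- the set of lengths
  set S : Set ℝ := { ℓ : ℝ | ∃ γ γ' : ℝ → ℂ, IsPiecewiseC1Path γ γ' ∧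
    γ 1 - γ 0 ∈ L ∧ γ 1 - γ 0 ≠ 0 ∧ ℓ = gLength f γ γ' } with hS
  have hbdd : ∀ ℓ ∈ S, (0:ℝ) ≤ ℓ := by
    rintro ℓ ⟨γ, γ', _, _, _, rfl⟩
    apply intervalIntegral.integral_nonneg zero_le_one
    intro t _
    exact mul_nonneg (by rw [hfdef]; exact (hFpos _).le) (norm_nonneg _)
  -- horizontal path at height y₀
  have hmem : F y₀ ∈ S := by
    refine ⟨fun t => (t : ℂ) + (y₀ : ℂ) * Complex.I, fun _ => 1, ?_, ?_, ?_, ?_⟩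
    · constructor
      · exact (Complex.continuous_ofReal.add continuous_const).continuousOn
      · refine ⟨1, fun i => (i : ℝ), one_pos, by norm_num, by norm_num, ?_, ?_⟩
        · intro i _; simp
        · intro i _
          refine ⟨fun _ => 1, continuousOn_const, ?_⟩
          intro x _
          refine ⟨?_, rfl⟩
          have h1 : HasDerivAt (fun t : ℝ => (t : ℂ)) 1 x := by
            exact Complex.ofRealCLM.hasDerivAt (x := x)
          simpa using h1.add_const ((y₀ : ℂ) * Complex.I)
    · rw [hL]; exact ⟨1, 0, by push_cast; ring⟩
    · intro h
      have : (1 : ℂ) = 0 := by simpa using h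
      simp at this
    · unfold gLength
      have hpt : ∀ t : ℝ, f ((t : ℂ) + (y₀ : ℂ) * Complex.I) * ‖(1:ℂ)‖ = F y₀ := by
        intro t; rw [hfxy]; simp
      simp_rw [hpt]
      simp
  have hsys : systole L f ≤ F y₀ := csInf_le ⟨0, hbdd⟩ hmem
  have hsysnn : 0 ≤ systole L f := le_csInf ⟨F y₀, hmem⟩ hbdd
  -- half of l1
  have hl1' : (1 / 2) * l1 = ∫ y in (0:ℝ)..1, max (m - F y) 0 := by
    have habs : ∀ y : ℝ, |F y - m| = (F y - m) + 2 * max (m - F y) 0 := by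
      intro y
      rcases le_total m (F y) with h | h
      · rw [abs_of_nonneg (by linarith), max_eq_right (by linarith)]; ring
      · rw [abs_of_nonpos (by linarith), max_eq_left (by linarith)]; ring
    rw [hl1]
    simp_rw [habs]
    rw [intervalIntegral.integral_add (f := fun y => F y - m)
      (g := fun y => 2 * max (m - F y) 0) ((hF.sub continuous_const).intervalIntegrable 0 1)
      (hintmax.const_mul 2),
      intervalIntegral.integral_sub hint1 (continuous_const.intervalIntegrable 0 1),
      intervalIntegral.integral_const_mul, ← hm, intervalIntegral.integral_const]
    simp [smul_eq_mul]
  -- F y₀ ≤ m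
  have hy₀le : F y₀ ≤ m := by
    have h := intervalIntegral.integral_mono_on zero_le_one
      (continuous_const.intervalIntegrable 0 1 :
        IntervalIntegrable (fun _ => F y₀) volume 0 1) hint1
      (fun y hy => hy₀min y hy)
    rw [intervalIntegral.integral_const] at h
    rw [hm]; simpa using h
  -- key: F y₀ + (1/2) l1 ≤ m
  have hkey : F y₀ + (1 / 2) * l1 ≤ m := by
    rw [hl1']
    have h2 : (∫ y in (0:ℝ)..1, max (m - F y) 0) ≤ ∫ _ in (0:ℝ)..1, (m - F y₀) := by
      apply intervalIntegral.integral_mono_on zero_le_one hintmax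
        (continuous_const.intervalIntegrable 0 1)
      intro y hy
      exact max_le (by linarith [hy₀min y hy]) (by linarith)
    rw [intervalIntegral.integral_const] at h2
    simp [smul_eq_mul] at h2
    linarith
  have hl1nn : 0 ≤ (1 / 2) * l1 := by
    rw [hl1']
    apply intervalIntegral.integral_nonneg zero_le_one
    intro y _; exact le_max_right _ _
  rw [ge_iff_le, hAV]
  exact pow_le_pow_left₀ (by linarith) (by linarith) 2
end

section
/- Let F : ℝ → ℝ be a continuous 1-periodic function with F > 0, and define f : ℝ² → ℝ by f(x,y) = F(y). Then the metric g = f²(dx²+dy²) on the unit square torus ℝ²/ℤ² satisfies the inequality with a second isosystolic defect term: area(g) − sys(g)² ≥ var(f) + (1/4)‖f₀‖₁², where f₀ = F − m, m = ∫₀¹ F(y) dy, and ‖f₀‖₁ = ∫₀¹ |F(y) − m| dy. -/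
open MeasureTheory intervalIntegral

/-- **One-variable conformal factor: Loewner's inequality with a second defect term.**
On the unit square torus `ℝ²/ℤ²`, if the conformal factor `f(x,y) = F(y)` depends only on
one variable, then `area(g) − sys(g)² ≥ var(f) + ¼‖f₀‖₁²`, where `f₀ = F − m`. -/
theorem loewner_one_variable_second_defect
    (F : ℝ → ℝ) (hF : Continuous F) (hFper : ∀ y : ℝ, F (y + 1) = F y)
    (hFpos : ∀ y, 0 < F y)
    (f : ℂ → ℝ) (hfdef : ∀ z : ℂ, f z = F z.im)
    (L : Set ℂ) (hL : L = {z : ℂ | ∃ m n : ℤ, z = (m : ℂ) + (n : ℂ) * Complex.I})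
    (area m var l1 : ℝ)
    (hm : m = ∫ y in (0:ℝ)..1, F y)
    (harea : area = ∫ x in (0:ℝ)..1, ∫ y in (0:ℝ)..1,
      (f ((x : ℂ) + (y : ℂ) * Complex.I)) ^ 2)
    (hvar : var = ∫ x in (0:ℝ)..1, ∫ y in (0:ℝ)..1,
      (f ((x : ℂ) + (y : ℂ) * Complex.I) - m) ^ 2)
    (hl1 : l1 = ∫ y in (0:ℝ)..1, |F y - m|) :
    area - systole L f ^ 2 ≥ var + (1 / 4) * l1 ^ 2 := by
  -- minimum of F on [0,1]
  obtain ⟨y₀, hy₀mem, hy₀⟩ := isCompact_Icc.exists_isMinOn (Set.nonempty_Icc.2 zero_le_one)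
    hF.continuousOn
  set c : ℝ := F y₀ with hc
  have hcpos : 0 < c := hFpos y₀
  have hcle : ∀ y ∈ Set.Icc (0:ℝ) 1, c ≤ F y := fun y hy => hy₀ hy
  -- integrability facts
  have hFi : IntervalIntegrable F volume 0 1 := hF.intervalIntegrable 0 1
  have hF2i : IntervalIntegrable (fun y => F y ^ 2) volume 0 1 :=
    (hF.pow 2).intervalIntegrable 0 1
  -- c ≤ m
  have hcm : c ≤ m := by
    have h1 : (∫ _ in (0:ℝ)..1, c) ≤ ∫ y in (0:ℝ)..1, F y :=
      intervalIntegral.integral_mono_on zero_le_one (intervalIntegrable_const) hFi hcle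
    simpa [hm] using h1
  -- l1 ≤ 2m - 2c
  have hl1le : l1 ≤ 2 * m - 2 * c := by
    have hpt : ∀ y ∈ Set.Icc (0:ℝ) 1, |F y - m| ≤ F y + (m - 2 * c) := by
      intro y hy
      have h1 := hcle y hy
      rw [abs_le]
      constructor <;> nlinarith
    have h2 : (∫ y in (0:ℝ)..1, |F y - m|) ≤ ∫ y in (0:ℝ)..1, (F y + (m - 2 * c)) :=
      intervalIntegral.integral_mono_on zero_le_one
        ((hF.sub continuous_const).abs.intervalIntegrable 0 1)
        (hFi.add intervalIntegrable_const) hpt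
    rw [intervalIntegral.integral_add hFi intervalIntegrable_const] at h2
    simp only [intervalIntegral.integral_const, smul_eq_mul, sub_zero, one_mul] at h2
    rw [hl1]
    rw [← hm] at h2
    linarith
  have hl1nn : 0 ≤ l1 := by
    rw [hl1]
    exact intervalIntegral.integral_nonneg zero_le_one (fun y _ => abs_nonneg _)
  -- area and var
  have him : ∀ x y : ℝ, ((x : ℂ) + (y : ℂ) * Complex.I).im = y := by
    intro x y; simp
  have harea' : area = ∫ y in (0:ℝ)..1, F y ^ 2 := by
    rw [harea]
    have : ∀ x : ℝ, (∫ y in (0:ℝ)..1, (f ((x : ℂ) + (y : ℂ) * Complex.I)) ^ 2)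
        = ∫ y in (0:ℝ)..1, F y ^ 2 := by
      intro x
      congr 1
      funext y
      rw [hfdef, him]
    simp_rw [this]
    simp
  have hvar' : var = ∫ y in (0:ℝ)..1, (F y - m) ^ 2 := by
    rw [hvar]
    have : ∀ x : ℝ, (∫ y in (0:ℝ)..1, (f ((x : ℂ) + (y : ℂ) * Complex.I) - m) ^ 2)
        = ∫ y in (0:ℝ)..1, (F y - m) ^ 2 := by
      intro x
      congr 1
      funext y
      rw [hfdef, him]
    simp_rw [this]
    simp
  have hav : area - var = m ^ 2 := by
    rw [harea', hvar']
    have hexp : ∀ y : ℝ, (F y - m) ^ 2 = F y ^ 2 - (2 * m) * F y + m ^ 2 := by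
      intro y; ring
    simp_rw [hexp]
    rw [intervalIntegral.integral_add (hF2i.sub ((continuous_const.mul hF : Continuous fun y => (2*m) * F y).intervalIntegrable 0 1) :
          IntervalIntegrable (fun y => F y ^ 2 - 2 * m * F y) volume 0 1)
        intervalIntegrable_const,
      intervalIntegral.integral_sub (f := fun y => F y ^ 2) (g := fun y => 2 * m * F y) hF2i (((continuous_const.mul hF : Continuous fun y => (2*m) * F y).intervalIntegrable 0 1) :
        IntervalIntegrable (fun y => 2 * m * F y) volume 0 1),
      intervalIntegral.integral_const_mul]
    simp only [intervalIntegral.integral_const, smul_eq_mul, sub_zero, one_mul]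
    rw [← hm]
    ring
  -- systole bound: the horizontal loop at height y₀
  set S : Set ℝ := { ℓ : ℝ | ∃ γ γ' : ℝ → ℂ, IsPiecewiseC1Path γ γ' ∧
    γ 1 - γ 0 ∈ L ∧ γ 1 - γ 0 ≠ 0 ∧ ℓ = gLength f γ γ' } with hS
  have hlb : ∀ ℓ ∈ S, (0:ℝ) ≤ ℓ := by
    rintro ℓ ⟨γ, γ', _, _, _, rfl⟩
    exact intervalIntegral.integral_nonneg zero_le_one
      (fun u _ => mul_nonneg (by rw [hfdef]; exact (hFpos _).le) (norm_nonneg _))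
  have hcS : c ∈ S := by
    refine ⟨fun t : ℝ => (t : ℂ) + (y₀ : ℂ) * Complex.I, fun _ => 1, ?_, ?_, ?_, ?_⟩
    · refine ⟨(Complex.continuous_ofReal.add continuous_const).continuousOn,
        1, fun i => (i : ℝ), one_pos, by norm_num, by norm_num, ?_, ?_⟩
      · intro i _; push_cast; linarith
      · intro i hi
        refine ⟨fun _ => 1, continuousOn_const, ?_⟩
        intro x _
        refine ⟨?_, rfl⟩
        have h1 : HasDerivAt (fun t : ℝ => (t : ℂ)) 1 x := by
          simpa using (hasDerivAt_id x).ofReal_comp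
        simpa using h1.add_const ((y₀ : ℂ) * Complex.I)
    · rw [hL]
      refine ⟨1, 0, ?_⟩
      push_cast; ring
    · have : ((1:ℝ) : ℂ) + (y₀ : ℂ) * Complex.I - (((0:ℝ) : ℂ) + (y₀ : ℂ) * Complex.I) = 1 := by
        push_cast; ring
      rw [this]; norm_num
    · unfold gLength
      have : ∀ t : ℝ, f ((t : ℂ) + (y₀ : ℂ) * Complex.I) * ‖(1:ℂ)‖ = c := by
        intro t
        rw [hfdef, him]
        simp [hc]
      simp_rw [this]
      simp
  have hsysle : systole L f ≤ c := csInf_le ⟨0, hlb⟩ hcS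
  have hsysnn : 0 ≤ systole L f := le_csInf ⟨c, hcS⟩ hlb
  -- conclude
  have hs2 : systole L f * systole L f ≤ c * c := mul_self_le_mul_self hsysnn hsysle
  nlinarith [sq_nonneg (m - l1 / 2 - c), mul_nonneg hl1nn hcpos.le]
end

section
/- Let F : ℝ → ℝ be a continuous 1-periodic function with F > 0, and define f : ℝ² → ℝ by f(x,y) = F(y). Then the systole of the metric g = f²(dx²+dy²) on the unit square torus ℝ²/ℤ² equals the minimum of F: sys(g) = min_{y∈[0,1]} F(y). -/
open MeasureTheory intervalIntegral

/-- Per-piece estimate: integrability and lower bound by `m * ‖γ b - γ a‖`. -/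
lemma piece_bound (m : ℝ) (f : ℂ → ℝ) (hf : Continuous f)
    (hm : 0 ≤ m) (hfm : ∀ z, m ≤ f z) (γ γ' : ℝ → ℂ) (a b : ℝ) (hab : a < b)
    (hγ : ContinuousOn γ (Set.Icc a b)) (d : ℝ → ℂ)
    (hd : ContinuousOn d (Set.Icc a b))
    (hder : ∀ x ∈ Set.Ioo a b, HasDerivAt γ (d x) x ∧ γ' x = d x) :
    IntervalIntegrable (fun t => f (γ t) * ‖γ' t‖) volume a b ∧
    m * ‖γ b - γ a‖ ≤ ∫ t in a..b, f (γ t) * ‖γ' t‖ := by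
  have hcont : ContinuousOn (fun t => f (γ t) * ‖d t‖) (Set.Icc a b) :=
    (hf.comp_continuousOn hγ).mul hd.norm
  have hii : IntervalIntegrable (fun t => f (γ t) * ‖d t‖) volume a b :=
    hcont.intervalIntegrable_of_Icc hab.le
  have hrestr : (volume : Measure ℝ).restrict (Set.Ioc a b)
      = (volume : Measure ℝ).restrict (Set.Ioo a b) :=
    (Measure.restrict_congr_set Ioo_ae_eq_Ioc).symm
  have hae : (fun t => f (γ t) * ‖γ' t‖)
      =ᵐ[(volume : Measure ℝ).restrict (Set.Ioc a b)] (fun t => f (γ t) * ‖d t‖) := by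
    rw [hrestr]
    filter_upwards [ae_restrict_mem measurableSet_Ioo] with x hx
    rw [(hder x hx).2]
  have hii' : IntervalIntegrable (fun t => f (γ t) * ‖γ' t‖) volume a b := by
    rw [intervalIntegrable_iff_integrableOn_Ioc_of_le hab.le] at hii ⊢
    exact hii.congr hae.symm
  have heq : (∫ t in a..b, f (γ t) * ‖γ' t‖) = ∫ t in a..b, f (γ t) * ‖d t‖ := by
    rw [integral_of_le hab.le, integral_of_le hab.le]
    exact integral_congr_ae hae
  have hdii : IntervalIntegrable d volume a b := hd.intervalIntegrable_of_Icc hab.le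
  have hftc : (∫ t in a..b, d t) = γ b - γ a := by
    refine integral_eq_sub_of_hasDeriv_right_of_le hab.le hγ (fun x hx => ?_) hdii
    exact ((hder x hx).1).hasDerivWithinAt
  refine ⟨hii', ?_⟩
  rw [heq]
  calc m * ‖γ b - γ a‖ = m * ‖∫ t in a..b, d t‖ := by rw [hftc]
    _ ≤ m * ∫ t in a..b, ‖d t‖ := by
        exact mul_le_mul_of_nonneg_left (norm_integral_le_integral_norm hab.le) hm
    _ = ∫ t in a..b, m * ‖d t‖ := by rw [intervalIntegral.integral_const_mul]
    _ ≤ ∫ t in a..b, f (γ t) * ‖d t‖ := by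
        refine integral_mono_on hab.le ((hdii.norm).const_mul m) hii fun x _ => ?_
        exact mul_le_mul_of_nonneg_right (hfm _) (norm_nonneg _)

/-- **Systole of a one-variable conformal metric on the square torus.**
If the conformal factor `f(x,y) = F(y)` on `ℝ²/ℤ²` depends only on one variable, then the
systole of `g = f²(dx²+dy²)` equals the minimum of `F` over `[0,1]`. -/
theorem systole_eq_min_of_one_variable
    (F : ℝ → ℝ) (hF : Continuous F) (hFper : ∀ y : ℝ, F (y + 1) = F y)
    (hFpos : ∀ y, 0 < F y)
    (f : ℂ → ℝ) (hfdef : ∀ z : ℂ, f z = F z.im)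
    (L : Set ℂ) (hL : L = {z : ℂ | ∃ m n : ℤ, z = (m : ℂ) + (n : ℂ) * Complex.I}) :
    systole L f = sInf (F '' Set.Icc (0:ℝ) 1) := by
  have hfcont : Continuous f := by
    have : f = F ∘ Complex.im := funext fun z => hfdef z
    rw [this]; exact hF.comp Complex.continuous_im
  obtain ⟨y₀, hy₀, hmin⟩ := isCompact_Icc.exists_isMinOn (Set.nonempty_Icc.mpr zero_le_one)
    hF.continuousOn
  -- value of the inf
  have hsinf : sInf (F '' Set.Icc (0:ℝ) 1) = F y₀ := by
    apply le_antisymm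
    · exact csInf_le (isCompact_Icc.bddBelow_image hF.continuousOn) ⟨y₀, hy₀, rfl⟩
    · exact le_csInf ((Set.nonempty_Icc.mpr zero_le_one).image F)
        (by rintro b ⟨y, hy, rfl⟩; exact hmin hy)
  set m := F y₀ with hmdef
  have hmpos : 0 < m := hFpos y₀
  -- m is a global lower bound of F
  have hFge : ∀ y : ℝ, m ≤ F y := by
    intro y
    have hper : Function.Periodic F 1 := hFper
    have h1 : F (Int.fract y) = F y := by
      have h2 := hper.sub_int_mul_eq (x := y) ⌊y⌋
      rw [mul_one] at h2
      exact h2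
    rw [← h1]
    exact hmin ⟨Int.fract_nonneg y, (Int.fract_lt_one y).le⟩
  have hfge : ∀ z : ℂ, m ≤ f z := fun z => by rw [hfdef]; exact hFge _
  rw [hsinf]
  -- the horizontal path
  have hmem : m ∈ { ℓ : ℝ | ∃ γ γ' : ℝ → ℂ, IsPiecewiseC1Path γ γ' ∧
      γ 1 - γ 0 ∈ L ∧ γ 1 - γ 0 ≠ 0 ∧ ℓ = gLength f γ γ' } := by
    refine ⟨fun t => (t : ℂ) + (y₀ : ℂ) * Complex.I, fun _ => 1, ?_, ?_, ?_, ?_⟩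
    · constructor
      · exact (Complex.continuous_ofReal.add continuous_const).continuousOn
      · refine ⟨1, fun i => (i : ℝ), one_pos, by norm_num, by norm_num,
          fun i hi => by interval_cases i <;> norm_num, fun i hi => ?_⟩
        refine ⟨fun _ => 1, continuousOn_const, fun x hx => ⟨?_, rfl⟩⟩
        have h1 : HasDerivAt (fun t : ℝ => (t : ℂ)) 1 x := by
          simpa using (hasDerivAt_id x).ofReal_comp
        simpa using h1.add_const ((y₀ : ℂ) * Complex.I)
    · rw [hL]; exact ⟨1, 0, by push_cast; ring⟩
    · intro h
      have : (1 : ℂ) = 0 := by simpa using h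
      exact one_ne_zero this
    · have : ∀ t : ℝ, f ((t : ℂ) + (y₀ : ℂ) * Complex.I) = m := by
        intro t; rw [hfdef]; simp [hmdef]
      simp only [gLength, this, norm_one, mul_one]
      rw [intervalIntegral.integral_const]
      simp
  -- lower bound: every element of the set is ≥ m
  have hlb : ∀ ℓ ∈ { ℓ : ℝ | ∃ γ γ' : ℝ → ℂ, IsPiecewiseC1Path γ γ' ∧
      γ 1 - γ 0 ∈ L ∧ γ 1 - γ 0 ≠ 0 ∧ ℓ = gLength f γ γ' }, m ≤ ℓ := by
    rintro ℓ ⟨γ, γ', ⟨hγc, n, t, hn, ht0, htn, htlt, hpieces⟩, hmemL, hne, rfl⟩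
    -- monotonicity of partition
    have hmono : ∀ i ≤ n, ∀ j, i ≤ j → j ≤ n → t i ≤ t j := by
      intro i hi j hij hjn
      induction j with
      | zero =>
        have : i = 0 := Nat.le_zero.mp hij
        simp [this]
      | succ k ih =>
        rcases Nat.lt_or_ge i (k+1) with h | h
        · have h1 : t i ≤ t k := by
            rcases Nat.eq_or_lt_of_le (Nat.lt_succ_iff.mp h) with rfl | hlt
            · exact le_refl _
            · exact ih (Nat.lt_succ_iff.mp h) (by omega)
          exact h1.trans (htlt k (by omega)).le
        · have : i = k + 1 := le_antisymm hij h
          subst this; exact le_refl _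
    have hrange : ∀ i ≤ n, t i ∈ Set.Icc (0:ℝ) 1 := fun i hi =>
      ⟨ht0 ▸ hmono 0 (Nat.zero_le n) i (Nat.zero_le i) hi, htn ▸ hmono i hi n hi le_rfl⟩
    choose d hdcont hdspec using hpieces
    have hpiece : ∀ i, i < n →
        IntervalIntegrable (fun s => f (γ s) * ‖γ' s‖) volume (t i) (t (i+1)) ∧
        m * ‖γ (t (i+1)) - γ (t i)‖ ≤ ∫ s in (t i)..(t (i+1)), f (γ s) * ‖γ' s‖ := by
      intro i hi
      refine piece_bound m f hfcont hmpos.le hfge γ γ' _ _ (htlt i hi)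
        (hγc.mono ?_) (d i hi) (hdcont i hi) (hdspec i hi)
      exact Set.Icc_subset_Icc (hrange i hi.le).1 (hrange (i+1) hi).2
    have hsum : ∑ i ∈ Finset.range n, (∫ s in (t i)..(t (i+1)), f (γ s) * ‖γ' s‖)
        = ∫ s in (0:ℝ)..1, f (γ s) * ‖γ' s‖ := by
      have h := intervalIntegral.sum_integral_adjacent_intervals
        (f := fun s => f (γ s) * ‖γ' s‖) (μ := volume) (a := t) (n := n)
        (fun k hk => (hpiece k hk).1)
      rw [ht0, htn] at h; exact h
    have htel : γ 1 - γ 0 = ∑ i ∈ Finset.range n, (γ (t (i+1)) - γ (t i)) := by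
      rw [Finset.sum_range_sub (fun i => γ (t i)), ht0, htn]
    have hnorm1 : (1:ℝ) ≤ ‖γ 1 - γ 0‖ := by
      rw [hL] at hmemL
      obtain ⟨p, q, hz⟩ := hmemL
      have hre : (γ 1 - γ 0).re = p := by rw [hz]; simp
      have him : (γ 1 - γ 0).im = q := by rw [hz]; simp
      have hnz : ¬(p = 0 ∧ q = 0) := by
        rintro ⟨rfl, rfl⟩; apply hne; rw [hz]; simp
      have h2 : ‖γ 1 - γ 0‖^2 = (p:ℝ)^2 + (q:ℝ)^2 := by
        rw [Complex.sq_norm, Complex.normSq_apply, hre, him]; ring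
      have hint : (1:ℝ) ≤ (p:ℝ)^2 + (q:ℝ)^2 := by
        have h3 : (1:ℤ) ≤ p^2 + q^2 := by
          rcases eq_or_ne p 0 with rfl | hp
          · rcases eq_or_ne q 0 with rfl | hq
            · exact absurd ⟨rfl, rfl⟩ hnz
            · have := Int.one_le_abs hq; nlinarith [sq_abs q]
          · have := Int.one_le_abs hp; nlinarith [sq_abs p, sq_nonneg q]
        exact_mod_cast h3
      nlinarith [norm_nonneg (γ 1 - γ 0)]
    calc m = m * 1 := (mul_one m).symm
      _ ≤ m * ‖γ 1 - γ 0‖ := mul_le_mul_of_nonneg_left hnorm1 hmpos.le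
      _ ≤ m * ∑ i ∈ Finset.range n, ‖γ (t (i+1)) - γ (t i)‖ := by
          refine mul_le_mul_of_nonneg_left ?_ hmpos.le
          rw [htel]; exact norm_sum_le _ _
      _ = ∑ i ∈ Finset.range n, m * ‖γ (t (i+1)) - γ (t i)‖ := Finset.mul_sum _ _ _
      _ ≤ ∑ i ∈ Finset.range n, (∫ s in (t i)..(t (i+1)), f (γ s) * ‖γ' s‖) :=
          Finset.sum_le_sum (fun i hi => (hpiece i (Finset.mem_range.mp hi)).2)
      _ = gLength f γ γ' := hsum
  exact le_antisymm (csInf_le ⟨m, hlb⟩ hmem) (le_csInf ⟨m, hmem⟩ hlb)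
end

section
/- Let f : ℝ² → ℝ be a continuous ℤ²-periodic function with f > 0, defining a metric g = f²(dx²+dy²) on the unit square torus ℝ²/ℤ². Define the biaxial projection P(f)(x,y) = g_f(x) + h_f(y), where g_f(x) = ∫₀¹ f(x,y) dy − m and h_f(y) = ∫₀¹ f(x,y) dx − m, with m the mean of f. Then area(g) − sys(g)² ≥ var(f) + (1/16)‖P(f)‖₁², where ‖P(f)‖₁ = ∫_{[0,1]²} |P(f)(x,y)| dx dy. -/
open MeasureTheory intervalIntegral

lemma horiz_deriv (c : ℂ) (x : ℝ) : HasDerivAt (fun t : ℝ => (t : ℂ) + c) 1 x := by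
  simpa using (Complex.ofRealCLM.hasDerivAt (x := x)).add_const c

lemma vert_deriv (c : ℂ) (x : ℝ) :
    HasDerivAt (fun t : ℝ => c + (t : ℂ) * Complex.I) Complex.I x := by
  have := (Complex.ofRealCLM.hasDerivAt (x := x)).mul_const Complex.I
  simpa using this.const_add c

lemma horiz_path (y₀ : ℝ) :
    IsPiecewiseC1Path (fun t : ℝ => (t : ℂ) + (y₀ : ℂ) * Complex.I) (fun _ => 1) := by
  refine ⟨(by fun_prop : Continuous _).continuousOn, 1, fun i => (i : ℝ), one_pos,
    by simp, by simp, fun i _ => by simp, fun i _ => ?_⟩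
  exact ⟨fun _ => 1, continuousOn_const, fun x _ => ⟨horiz_deriv _ x, rfl⟩⟩

lemma vert_path (x₀ : ℝ) :
    IsPiecewiseC1Path (fun t : ℝ => (x₀ : ℂ) + (t : ℂ) * Complex.I) (fun _ => Complex.I) := by
  refine ⟨(by fun_prop : Continuous _).continuousOn, 1, fun i => (i : ℝ), one_pos,
    by simp, by simp, fun i _ => by simp, fun i _ => ?_⟩
  exact ⟨fun _ => Complex.I, continuousOn_const, fun x _ => ⟨vert_deriv _ x, rfl⟩⟩

lemma fubini_unit (F : ℝ → ℝ → ℝ) (hF : Continuous (Function.uncurry F)) :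
    (∫ x in (0:ℝ)..1, ∫ y in (0:ℝ)..1, F x y) = ∫ y in (0:ℝ)..1, ∫ x in (0:ℝ)..1, F x y := by
  have h01 : (0:ℝ) ≤ 1 := zero_le_one
  rw [intervalIntegral.integral_of_le h01, intervalIntegral.integral_of_le h01]
  simp_rw [intervalIntegral.integral_of_le h01]
  apply MeasureTheory.integral_integral_swap
  rw [Measure.prod_restrict]
  have h : IntegrableOn (Function.uncurry F) (Set.Icc (0:ℝ) 1 ×ˢ Set.Icc (0:ℝ) 1) volume :=
    hF.continuousOn.integrableOn_compact (isCompact_Icc.prod isCompact_Icc)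
  exact h.mono_set (Set.prod_mono Set.Ioc_subset_Icc_self Set.Ioc_subset_Icc_self)

lemma contParam (F : ℝ → ℝ → ℝ) (hF : Continuous (Function.uncurry F)) :
    Continuous fun x => ∫ y in (0:ℝ)..1, F x y :=
  continuous_parametric_intervalIntegral_of_continuous' hF 0 1

lemma keymin (u : ℝ → ℝ) (hu : Continuous u) (hzero : (∫ x in (0:ℝ)..1, u x) = 0) :
    ∃ x₀ ∈ Set.Icc (0:ℝ) 1, u x₀ ≤ 0 ∧ (∫ x in (0:ℝ)..1, |u x|) ≤ -2 * u x₀ := by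
  obtain ⟨x₀, hx₀, hmin⟩ := isCompact_Icc.exists_isMinOn (Set.nonempty_Icc.2 zero_le_one)
    hu.continuousOn
  have hmin' : ∀ x ∈ Set.Icc (0:ℝ) 1, u x₀ ≤ u x := fun x hx => hmin hx
  have hle0 : u x₀ ≤ 0 := by
    have h1 : (∫ x in (0:ℝ)..1, u x₀) ≤ ∫ x in (0:ℝ)..1, u x :=
      intervalIntegral.integral_mono_on zero_le_one intervalIntegrable_const
        (hu.intervalIntegrable 0 1) (fun x hx => hmin' x hx)
    simpa [hzero] using h1
  refine ⟨x₀, hx₀, hle0, ?_⟩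
  have h2 : (∫ x in (0:ℝ)..1, |u x|) ≤ ∫ x in (0:ℝ)..1, (u x - 2 * u x₀) := by
    apply intervalIntegral.integral_mono_on zero_le_one (hu.abs.intervalIntegrable 0 1)
      ((hu.sub continuous_const).intervalIntegrable 0 1)
    intro x hx
    rcases abs_cases (u x) with ⟨h, _⟩ | ⟨h, _⟩ <;> have := hmin' x hx <;> simp only [Pi.sub_apply] at * <;> linarith
  have h3 : (∫ x in (0:ℝ)..1, (u x - 2 * u x₀)) = -2 * u x₀ := by
    rw [intervalIntegral.integral_sub (hu.intervalIntegrable 0 1) intervalIntegrable_const]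
    simp [hzero]
  linarith


/-- **Loewner's torus inequality with second defect via the biaxial projection.**
On the unit square torus `ℝ²/ℤ²`, with `g_f(x) = ∫₀¹ f(x,y)dy − m`, `h_f(y) = ∫₀¹ f(x,y)dx − m`
and biaxial projection `P(f)(x,y) = g_f(x) + h_f(y)`, every metric `f²(dx²+dy²)` satisfies
`area(g) − sys(g)² ≥ var(f) + (1/16)‖P(f)‖₁²`. -/
theorem loewner_biaxial_second_defect
    (f : ℂ → ℝ) (hf : Continuous f) (hfpos : ∀ z, 0 < f z)
    (L : Set ℂ) (hL : L = {z : ℂ | ∃ m n : ℤ, z = (m : ℂ) + (n : ℂ) * Complex.I})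
    (hper : ∀ z ∈ L, ∀ x : ℂ, f (x + z) = f x)
    (area m var : ℝ)
    (hm : m = ∫ x in (0:ℝ)..1, ∫ y in (0:ℝ)..1, f ((x : ℂ) + (y : ℂ) * Complex.I))
    (harea : area = ∫ x in (0:ℝ)..1, ∫ y in (0:ℝ)..1,
      (f ((x : ℂ) + (y : ℂ) * Complex.I)) ^ 2)
    (hvar : var = ∫ x in (0:ℝ)..1, ∫ y in (0:ℝ)..1,
      (f ((x : ℂ) + (y : ℂ) * Complex.I) - m) ^ 2)
    (gf hf' : ℝ → ℝ)
    (hgf : ∀ x : ℝ, gf x = (∫ y in (0:ℝ)..1, f ((x : ℂ) + (y : ℂ) * Complex.I)) - m)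
    (hhf : ∀ y : ℝ, hf' y = (∫ x in (0:ℝ)..1, f ((x : ℂ) + (y : ℂ) * Complex.I)) - m)
    (P1 : ℝ)
    (hP1 : P1 = ∫ x in (0:ℝ)..1, ∫ y in (0:ℝ)..1, |gf x + hf' y|) :
    area - systole L f ^ 2 ≥ var + (1 / 16) * P1 ^ 2 := by
  set F : ℝ → ℝ → ℝ := fun x y => f ((x : ℂ) + (y : ℂ) * Complex.I) with hF
  have hFc : Continuous (Function.uncurry F) := by
    apply hf.comp; fun_prop
  have hFx : ∀ x, Continuous fun y => F x y := fun x => hFc.comp (Continuous.prodMk_right x)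
  have hFy : ∀ y, Continuous fun x => F x y :=
    fun y => hFc.comp (continuous_id.prodMk continuous_const)
  -- continuity of the marginals
  have hI1 : Continuous fun x => ∫ y in (0:ℝ)..1, F x y := contParam F hFc
  have hI1' : Continuous fun y => ∫ x in (0:ℝ)..1, F x y := by
    have : Continuous (Function.uncurry fun y x => F x y) := hFc.comp continuous_swap
    exact contParam _ this
  have hgfc : Continuous gf := by
    have : gf = fun x => (∫ y in (0:ℝ)..1, F x y) - m := funext hgf
    rw [this]; exact hI1.sub continuous_const
  have hhfc : Continuous hf' := by
    have : hf' = fun y => (∫ x in (0:ℝ)..1, F x y) - m := funext hhf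
    rw [this]; exact hI1'.sub continuous_const
  -- zero means
  have hgf0 : (∫ x in (0:ℝ)..1, gf x) = 0 := by
    simp_rw [hgf]
    rw [intervalIntegral.integral_sub (hI1.intervalIntegrable 0 1) intervalIntegrable_const]
    simp [← hm]
    exact sub_eq_zero.mpr hm.symm
  have hhf0 : (∫ y in (0:ℝ)..1, hf' y) = 0 := by
    simp_rw [hhf]
    rw [intervalIntegral.integral_sub (hI1'.intervalIntegrable 0 1) intervalIntegrable_const]
    rw [← fubini_unit F hFc]
    simp [← hm]
    exact sub_eq_zero.mpr hm.symm
  obtain ⟨x₀, hx₀, hgx0, hgabs⟩ := keymin gf hgfc hgf0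
  obtain ⟨y₀, hy₀, hhy0, hhabs⟩ := keymin hf' hhfc hhf0
  -- the systole set
  set S := { ℓ : ℝ | ∃ γ γ' : ℝ → ℂ, IsPiecewiseC1Path γ γ' ∧
    γ 1 - γ 0 ∈ L ∧ γ 1 - γ 0 ≠ 0 ∧ ℓ = gLength f γ γ' } with hS
  have hSnonneg : ∀ ℓ ∈ S, 0 ≤ ℓ := by
    rintro ℓ ⟨γ, γ', _, _, _, rfl⟩
    exact intervalIntegral.integral_nonneg zero_le_one
      (fun t _ => mul_nonneg (hfpos _).le (norm_nonneg _))
  have hbdd : BddBelow S := ⟨0, fun ℓ hℓ => hSnonneg ℓ hℓ⟩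
  have hsys0 : 0 ≤ systole L f := Real.sInf_nonneg hSnonneg
  -- horizontal loop at height y₀
  have hvert : systole L f ≤ m + hf' y₀ := by
    apply csInf_le hbdd
    refine ⟨fun t : ℝ => (t : ℂ) + (y₀ : ℂ) * Complex.I, fun _ => 1, horiz_path y₀,
      ?_, ?_, ?_⟩
    · rw [hL]; exact ⟨1, 0, by simp⟩
    · simp
    · rw [hhf y₀]
      unfold gLength
      simp
  -- vertical loop at x₀
  have hhor : systole L f ≤ m + gf x₀ := by
    apply csInf_le hbdd
    refine ⟨fun t : ℝ => (x₀ : ℂ) + (t : ℂ) * Complex.I, fun _ => Complex.I, vert_path x₀,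
      ?_, ?_, ?_⟩
    · rw [hL]; exact ⟨0, 1, by simp⟩
    · simp [Complex.ext_iff]
    · rw [hgf x₀]
      unfold gLength
      simp
  -- P1 bounds
  have hCabs : (0:ℝ) ≤ ∫ y in (0:ℝ)..1, |hf' y| :=
    intervalIntegral.integral_nonneg zero_le_one (fun y _ => abs_nonneg _)
  have hinnerc : Continuous fun x => ∫ y in (0:ℝ)..1, |gf x + hf' y| := by
    apply contParam
    exact ((hgfc.comp continuous_fst).add (hhfc.comp continuous_snd)).abs
  have hP1nonneg : 0 ≤ P1 := by
    rw [hP1]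
    exact intervalIntegral.integral_nonneg zero_le_one (fun x _ =>
      intervalIntegral.integral_nonneg zero_le_one (fun y _ => abs_nonneg _))
  have hP1le : P1 ≤ (∫ x in (0:ℝ)..1, |gf x|) + ∫ y in (0:ℝ)..1, |hf' y| := by
    rw [hP1]
    have step1 : ∀ x, (∫ y in (0:ℝ)..1, |gf x + hf' y|) ≤ |gf x| + ∫ y in (0:ℝ)..1, |hf' y| := by
      intro x
      have h1 : (∫ y in (0:ℝ)..1, |gf x + hf' y|) ≤ ∫ y in (0:ℝ)..1, (|gf x| + |hf' y|) :=
        intervalIntegral.integral_mono_on zero_le_one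
          (((continuous_const.add hhfc).abs).intervalIntegrable 0 1)
          ((continuous_const.add hhfc.abs).intervalIntegrable 0 1)
          (fun y _ => abs_add_le _ _)
      have h2 : (∫ y in (0:ℝ)..1, (|gf x| + |hf' y|)) = |gf x| + ∫ y in (0:ℝ)..1, |hf' y| := by
        rw [intervalIntegral.integral_add intervalIntegrable_const
          (hhfc.abs.intervalIntegrable 0 1)]
        simp
      linarith
    calc (∫ x in (0:ℝ)..1, ∫ y in (0:ℝ)..1, |gf x + hf' y|)
        ≤ ∫ x in (0:ℝ)..1, (|gf x| + ∫ y in (0:ℝ)..1, |hf' y|) :=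
          intervalIntegral.integral_mono_on zero_le_one
            (hinnerc.intervalIntegrable 0 1)
            ((hgfc.abs.add continuous_const).intervalIntegrable 0 1)
            (fun x _ => step1 x)
      _ = (∫ x in (0:ℝ)..1, |gf x|) + ∫ y in (0:ℝ)..1, |hf' y| := by
          rw [intervalIntegral.integral_add (hgfc.abs.intervalIntegrable 0 1)
            intervalIntegrable_const]
          simp
  -- area identity
  have hareavar : area = var + m ^ 2 := by
    have inner : ∀ x, (∫ y in (0:ℝ)..1, (F x y - m) ^ 2)
        = (∫ y in (0:ℝ)..1, F x y ^ 2) - 2 * m * (∫ y in (0:ℝ)..1, F x y) + m ^ 2 := by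
      intro x
      have h1 : ∀ y : ℝ, (F x y - m) ^ 2 = F x y ^ 2 - 2 * m * F x y + m ^ 2 := by
        intro y; ring
      simp_rw [h1]
      rw [intervalIntegral.integral_add
        ((show Continuous (fun y => F x y ^ 2 - 2 * m * F x y) from ((hFx x).pow 2).sub (continuous_const.mul (hFx x))).intervalIntegrable 0 1)
        intervalIntegrable_const]
      rw [intervalIntegral.integral_sub ((show Continuous (fun y => F x y ^ 2) from (hFx x).pow 2).intervalIntegrable 0 1)
        ((show Continuous (fun y => 2 * m * F x y) from continuous_const.mul (hFx x)).intervalIntegrable 0 1)]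
      rw [intervalIntegral.integral_const_mul]
      simp
    have hI2 : Continuous fun x => ∫ y in (0:ℝ)..1, F x y ^ 2 := by
      apply contParam
      exact hFc.pow 2
    have houter : (∫ x in (0:ℝ)..1, ∫ y in (0:ℝ)..1, (F x y - m) ^ 2)
        = (∫ x in (0:ℝ)..1, ∫ y in (0:ℝ)..1, F x y ^ 2)
          - 2 * m * (∫ x in (0:ℝ)..1, ∫ y in (0:ℝ)..1, F x y) + m ^ 2 := by
      simp_rw [inner]
      rw [intervalIntegral.integral_add
        ((show Continuous (fun x => (∫ y in (0:ℝ)..1, F x y ^ 2) - 2 * m * ∫ y in (0:ℝ)..1, F x y) from hI2.sub (continuous_const.mul hI1)).intervalIntegrable 0 1)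
        intervalIntegrable_const]
      rw [intervalIntegral.integral_sub (hI2.intervalIntegrable 0 1)
        ((show Continuous (fun x => 2 * m * ∫ y in (0:ℝ)..1, F x y) from continuous_const.mul hI1).intervalIntegrable 0 1)]
      rw [intervalIntegral.integral_const_mul]
      simp
    rw [hvar, harea]
    rw [show (∫ x in (0:ℝ)..1, ∫ y in (0:ℝ)..1, (f ((x:ℂ)+(y:ℂ)*Complex.I) - m) ^ 2)
      = ∫ x in (0:ℝ)..1, ∫ y in (0:ℝ)..1, (F x y - m) ^ 2 from rfl]
    rw [houter, ← hm]
    ring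
  -- final arithmetic
  set s := systole L f with hs
  have hkey : s + P1 / 4 ≤ m := by
    have : P1 ≤ -2 * gf x₀ - 2 * hf' y₀ := by linarith
    linarith
  have hsq : (s + P1 / 4) * (s + P1 / 4) ≤ m * m :=
    mul_self_le_mul_self (by positivity) hkey
  nlinarith [mul_nonneg hsys0 hP1nonneg]
end

section
/- Let τ ∈ ℂ with Im τ > 0, set σ = √(Im τ), and let L = ℤ·(σ⁻¹τ) + ℤ·(σ⁻¹) ⊂ ℂ ≅ ℝ² (a lattice of covolume 1) with fundamental domain D = { s·σ⁻¹ + t·σ⁻¹τ : s, t ∈ [0,1) }. Then for every continuous L-periodic function f : ℝ² → ℝ with f > 0, the mean satisfies the lower bound ∫_D f ≥ σ·sys(g), where g = f²(dx²+dy²). -/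
open MeasureTheory intervalIntegral

/-- **Lower bound for the mean of the conformal factor.**
For `τ` in the upper half plane, `σ = √(Im τ)`, and the unit-covolume lattice
`L = ℤ·(σ⁻¹τ) + ℤ·σ⁻¹ ⊂ ℂ` with fundamental domain `D = {s·σ⁻¹ + t·σ⁻¹τ : s,t ∈ [0,1)}`,
every continuous positive `L`-periodic `f` satisfies `∫_D f ≥ σ·sys(f²(dx²+dy²))`. -/
theorem mean_ge_sigma_mul_systole
    (τ : ℂ) (hτ : 0 < τ.im) (σ : ℝ) (hσ : σ = Real.sqrt τ.im)
    (L : Set ℂ)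
    (hL : L = {z : ℂ | ∃ m n : ℤ, z = (m : ℂ) * ((σ : ℂ)⁻¹ * τ) + (n : ℂ) * (σ : ℂ)⁻¹})
    (f : ℂ → ℝ) (hf : Continuous f) (hfpos : ∀ z, 0 < f z)
    (hper : ∀ z ∈ L, ∀ x : ℂ, f (x + z) = f x)
    (mean : ℝ)
    (hmean : mean = ∫ s in (0:ℝ)..1, ∫ t in (0:ℝ)..1,
      f ((s : ℂ) * (σ : ℂ)⁻¹ + (t : ℂ) * ((σ : ℂ)⁻¹ * τ))) :
    mean ≥ σ * systole L f := by
  have hσpos : 0 < σ := hσ ▸ Real.sqrt_pos.mpr hτ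
  have hσC : ((σ : ℂ)) ≠ 0 := by exact_mod_cast ne_of_gt hσpos
  set c : ℂ := (σ : ℂ)⁻¹ with hc
  set w : ℂ := (σ : ℂ)⁻¹ * τ with hw
  set F : ℝ → ℝ → ℝ := fun s t => f ((s : ℂ) * c + (t : ℂ) * w) with hF
  -- the set defining the systole is bounded below by 0
  have hbdd : BddBelow { ℓ : ℝ | ∃ γ γ' : ℝ → ℂ, IsPiecewiseC1Path γ γ' ∧
      γ 1 - γ 0 ∈ L ∧ γ 1 - γ 0 ≠ 0 ∧ ℓ = gLength f γ γ' } := by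
    refine ⟨0, ?_⟩
    rintro ℓ ⟨γ, γ', _, _, _, rfl⟩
    exact intervalIntegral.integral_nonneg (by norm_num)
      (fun x _ => mul_nonneg (hfpos _).le (norm_nonneg _))
  -- key bound for each horizontal loop
  have key : ∀ t : ℝ, σ * systole L f ≤ ∫ s in (0:ℝ)..1, F s t := by
    intro t
    set γ : ℝ → ℂ := fun s => (s : ℂ) * c + (t : ℂ) * w with hγ
    have hderiv : ∀ x : ℝ, HasDerivAt γ c x := by
      intro x
      have h1 : HasDerivAt (fun s : ℝ => (s : ℂ)) 1 x := by
        simpa using (hasDerivAt_id x).ofReal_comp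
      simpa only [one_mul] using (h1.mul_const c).add_const ((t : ℂ) * w)
    have hmem : gLength f γ (fun _ => c) ∈ { ℓ : ℝ | ∃ γ γ' : ℝ → ℂ,
        IsPiecewiseC1Path γ γ' ∧ γ 1 - γ 0 ∈ L ∧ γ 1 - γ 0 ≠ 0 ∧ ℓ = gLength f γ γ' } := by
      refine ⟨γ, fun _ => c, ?_, ?_, ?_, rfl⟩
      · refine ⟨(by fun_prop), 1, fun i => (i : ℝ), one_pos, by norm_num, by norm_num,
          ?_, ?_⟩
        · intro i _; push_cast; linarith
        · intro i _
          exact ⟨fun _ => c, continuousOn_const, fun x _ => ⟨hderiv x, rfl⟩⟩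
      · rw [hL]
        refine ⟨0, 1, ?_⟩
        simp [hγ]
      · simp only [hγ]
        intro h
        apply inv_ne_zero hσC
        simpa [hc] using h
    have hsys : systole L f ≤ gLength f γ (fun _ => c) := csInf_le hbdd hmem
    have hnorm : ‖c‖ = σ⁻¹ := by
      rw [hc, norm_inv, Complex.norm_real, Real.norm_of_nonneg hσpos.le]
    have hlen : gLength f γ (fun _ => c) = (∫ s in (0:ℝ)..1, F s t) * σ⁻¹ := by
      unfold gLength
      rw [← intervalIntegral.integral_mul_const]
      simp only [hnorm, hF, hγ]
    rw [hlen] at hsys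
    calc σ * systole L f ≤ σ * ((∫ s in (0:ℝ)..1, F s t) * σ⁻¹) :=
          mul_le_mul_of_nonneg_left hsys hσpos.le
      _ = ∫ s in (0:ℝ)..1, F s t := by field_simp
  -- Fubini: swap the order of integration
  have hFcont : Continuous (Function.uncurry F) := by
    apply hf.comp
    fun_prop
  have hInt : Integrable (Function.uncurry F)
      ((volume.restrict (Set.Ioc (0:ℝ) 1)).prod (volume.restrict (Set.Ioc (0:ℝ) 1))) := by
    rw [Measure.prod_restrict]
    exact (hFcont.continuousOn.integrableOn_compact (isCompact_Icc.prod isCompact_Icc)).mono_set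
      (Set.prod_mono Set.Ioc_subset_Icc_self Set.Ioc_subset_Icc_self)
  have hswap : mean = ∫ t in Set.Ioc (0:ℝ) 1, ∫ s in Set.Ioc (0:ℝ) 1, F s t := by
    rw [hmean]
    rw [intervalIntegral.integral_of_le (by norm_num : (0:ℝ) ≤ 1)]
    have : ∀ s : ℝ, (∫ t in (0:ℝ)..1, F s t) = ∫ t in Set.Ioc (0:ℝ) 1, F s t := fun s =>
      intervalIntegral.integral_of_le (by norm_num)
    calc (∫ s in Set.Ioc (0:ℝ) 1, ∫ t in (0:ℝ)..1, F s t)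
        = ∫ s in Set.Ioc (0:ℝ) 1, ∫ t in Set.Ioc (0:ℝ) 1, F s t := by
          simp only [this]
      _ = ∫ t in Set.Ioc (0:ℝ) 1, ∫ s in Set.Ioc (0:ℝ) 1, F s t :=
          MeasureTheory.integral_integral_swap hInt
  have hI_int : IntegrableOn (fun t => ∫ s in Set.Ioc (0:ℝ) 1, F s t)
      (Set.Ioc (0:ℝ) 1) volume := hInt.integral_prod_right
  have hconst_int : IntegrableOn (fun _ : ℝ => σ * systole L f) (Set.Ioc (0:ℝ) 1) volume :=
    integrableOn_const measure_Ioc_lt_top.ne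
  have hmono : (∫ _ in Set.Ioc (0:ℝ) 1, σ * systole L f) ≤
      ∫ t in Set.Ioc (0:ℝ) 1, ∫ s in Set.Ioc (0:ℝ) 1, F s t := by
    refine setIntegral_mono_on hconst_int hI_int measurableSet_Ioc ?_
    intro t _
    have := key t
    rwa [intervalIntegral.integral_of_le (by norm_num : (0:ℝ) ≤ 1)] at this
  have hconst : (∫ _ in Set.Ioc (0:ℝ) 1, σ * systole L f) = σ * systole L f := by
    simp [Real.volume_Ioc]
  rw [ge_iff_le, hswap, ← hconst]
  exact hmono
end

section
/- Let f : ℝ → ℝ be a continuous L-periodic function (f(t + L) = f(t) for a fixed L > 0) with f > 0, and let φ : ℝ → ℝ be a differentiable function satisfying φ′(ψ) = f(φ(ψ)) for all ψ and φ(0) = 0. Set b = ∫₀^L dt/f(t). Then φ(ψ + b) = φ(ψ) + L for all ψ ∈ ℝ; consequently the isothermal parametrization of the torus of revolution generated by an L-periodic unit-speed curve is doubly periodic with periods 2π in θ and b in ψ, so the torus is conformally equivalent to the flat torus defined by the rectangular lattice 2πℤ ⊕ bℤ. -/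
/-- **Conformal type of a torus of revolution.**
Let `(f, g)` be an `L`-periodic unit-speed generating curve with `f > 0`, and let `φ` solve
`φ'(ψ) = f(φ(ψ))`, `φ(0) = 0`. With `b = ∫₀ᴸ dt/f(t)`, we have `φ(ψ + b) = φ(ψ) + L` for
all `ψ`; consequently the isothermal parametrization
`X(θ,ψ) = (f(φψ)cos θ, f(φψ)sin θ, g(φψ))` is doubly periodic with periods `2π` in `θ` and
`b` in `ψ`, so the torus of revolution is conformally equivalent to the flat torus of the
rectangular lattice `2πℤ ⊕ bℤ`. -/
theorem torus_of_revolution_conformal_type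
    (L : ℝ) (hL : 0 < L)
    (f g : ℝ → ℝ) (hf : Continuous f)
    (hfper : ∀ t : ℝ, f (t + L) = f t) (hgper : ∀ t : ℝ, g (t + L) = g t)
    (hfpos : ∀ t, 0 < f t)
    (φ : ℝ → ℝ) (hφ : ∀ ψ : ℝ, HasDerivAt φ (f (φ ψ)) ψ) (hφ0 : φ 0 = 0)
    (b : ℝ) (hb : b = ∫ t in (0:ℝ)..L, 1 / f t)
    (X : ℝ → ℝ → EuclideanSpace ℝ (Fin 3))
    (hX : ∀ θ ψ : ℝ, X θ ψ = (WithLp.equiv 2 (Fin 3 → ℝ)).symm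
      ![f (φ ψ) * Real.cos θ, f (φ ψ) * Real.sin θ, g (φ ψ)]) :
    (∀ ψ : ℝ, φ (ψ + b) = φ ψ + L) ∧
    (∀ θ ψ : ℝ, X (θ + 2 * Real.pi) ψ = X θ ψ) ∧
    (∀ θ ψ : ℝ, X θ (ψ + b) = X θ ψ) := by
  have h1cont : Continuous (fun t => 1 / f t) :=
    continuous_const.div hf (fun t => (hfpos t).ne')
  set F : ℝ → ℝ := fun x => ∫ t in (0:ℝ)..x, 1 / f t with hF
  have hFderiv : ∀ x : ℝ, HasDerivAt F (1 / f x) x := by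
    intro x
    exact intervalIntegral.integral_hasDerivAt_right
      (h1cont.intervalIntegrable 0 x)
      (h1cont.stronglyMeasurableAtFilter _ _)
      h1cont.continuousAt
  have hFmono : StrictMono F := by
    apply strictMono_of_deriv_pos
    intro x
    rw [(hFderiv x).deriv]
    exact div_pos one_pos (hfpos x)
  -- F (φ ψ) = ψ
  have hkey : ∀ ψ : ℝ, F (φ ψ) = ψ := by
    have hG : ∀ ψ : ℝ, HasDerivAt (fun ψ => F (φ ψ) - ψ) 0 ψ := by
      intro ψ
      have := ((hFderiv (φ ψ)).comp ψ (hφ ψ)).sub (hasDerivAt_id ψ)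
      convert this using 1
      all_goals try rfl
      rw [one_div, inv_mul_cancel₀ (hfpos (φ ψ)).ne', sub_self]
    intro ψ
    have hconst : (fun ψ => F (φ ψ) - ψ) ψ = (fun ψ => F (φ ψ) - ψ) 0 :=
      is_const_of_deriv_eq_zero (fun x => (hG x).differentiableAt)
        (fun x => (hG x).deriv) ψ 0
    simp only [hφ0] at hconst
    have hF0 : F 0 = 0 := intervalIntegral.integral_same
    rw [hF0] at hconst
    linarith
  -- F (x + L) = F x + b
  have hFper : ∀ x : ℝ, F (x + L) = F x + b := by
    intro x
    have hper : Function.Periodic (fun t => 1 / f t) L := fun t => by simp [hfper]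
    have hadd : F x + (∫ t in x..(x + L), 1 / f t) = F (x + L) :=
      intervalIntegral.integral_add_adjacent_intervals
        (h1cont.intervalIntegrable 0 x) (h1cont.intervalIntegrable x (x + L))
    have := hper.intervalIntegral_add_eq x 0
    rw [zero_add] at this
    rw [← hadd, this, hb]
  have hmain : ∀ ψ : ℝ, φ (ψ + b) = φ ψ + L := by
    intro ψ
    apply hFmono.injective
    rw [hkey, hFper, hkey]
  refine ⟨hmain, ?_, ?_⟩
  · intro θ ψ
    rw [hX, hX, Real.cos_add_two_pi, Real.sin_add_two_pi]
  · intro θ ψ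
    rw [hX, hX, hmain, hfper, hgper]
end
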